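/- arXiv:2007.03986 — 5 statements merged into one kernel-verified Lean document; each statement's English description precedes it below -/
import Mathlib

section
/- Let A and B be adjacent integer points in the grid G = {0,…,m−1} × {0,…,n−1} (i.e., AB is a prime segment). Then the function f defined by the oriented segment AB is a threshold function on G: there exists a real affine function ℓ(x,y) = a1·x + a2·y − a0 such that for every point X in G, f(X) = 1 if and only if ℓ(X) ≥ 0. -/
/-- Cast an integer point to the real plane. -/
def toR (p : ℤ × ℤ) : ℝ × ℝ := ((p.1 : ℝ), (p.2 : ℝ))

/-- Signed area determinant Δ(P,Q,R). -/
def Det (P Q R : ℤ × ℤ) : ℤ :=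
  (Q.1 - P.1) * (R.2 - P.2) - (Q.2 - P.2) * (R.1 - P.1)

/-- Two integer points are adjacent: distinct, and the segment between them
contains no integer point other than the endpoints. -/
def Adjacent (A B : ℤ × ℤ) : Prop :=
  A ≠ B ∧ ∀ C : ℤ × ℤ, toR C ∈ segment ℝ (toR A) (toR B) → C = A ∨ C = B

/-- The {0,1}-valued (Bool-valued) function defined by the oriented prime
segment AB: on the line through A and B it is true iff the point is strictly
closer to A than to B; off the line it is true iff triangle A B X is
counterclockwise. -/
def fseg (A B X : ℤ × ℤ) : Bool :=
  if Det A B X = 0 then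
    decide ((X.1 - A.1) ^ 2 + (X.2 - A.2) ^ 2 < (X.1 - B.1) ^ 2 + (X.2 - B.2) ^ 2)
  else
    decide (0 < Det A B X)

/-- The grid {0,…,m−1} × {0,…,n−1} as a set of integer points. -/
def Grid (m n : ℕ) : Set (ℤ × ℤ) :=
  {p | 0 ≤ p.1 ∧ p.1 < (m : ℤ) ∧ 0 ≤ p.2 ∧ p.2 < (n : ℤ)}

/-- A pair of oriented prime segments (A,B), (C,D) is proper. -/
def ProperPair (A B C D : ℤ × ℤ) : Prop :=
  Adjacent A B ∧ Adjacent C D ∧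
    fseg C D A = true ∧ fseg C D B = true ∧ fseg A B C = true ∧ fseg A B D = true

/-- f is a threshold function on the grid. -/
def IsThreshold (m n : ℕ) (f : ℤ × ℤ → Bool) : Prop :=
  ∃ a0 a1 a2 : ℝ, ∀ p ∈ Grid m n,
    (f p = true ↔ a1 * (p.1 : ℝ) + a2 * (p.2 : ℝ) ≥ a0)

/-- f is a 2-threshold function on the grid: a conjunction of two threshold
functions. -/
def Is2Threshold (m n : ℕ) (f : ℤ × ℤ → Bool) : Prop :=
  ∃ g h : ℤ × ℤ → Bool, IsThreshold m n g ∧ IsThreshold m n h ∧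
    ∀ p ∈ Grid m n, f p = (g p && h p)

/-- Adjacency gives a primitive direction vector. -/
lemma adj_coprime (A B : ℤ × ℤ) (h : Adjacent A B) :
    IsCoprime (B.1 - A.1) (B.2 - A.2) := by
  obtain ⟨hne, hseg⟩ := h
  set d1 := B.1 - A.1 with hd1
  set d2 := B.2 - A.2 with hd2
  rw [Int.isCoprime_iff_gcd_eq_one]
  set g : ℕ := Int.gcd d1 d2 with hg
  have hd : ¬(d1 = 0 ∧ d2 = 0) := by
    rintro ⟨h1, h2⟩
    apply hne
    have : B.1 = A.1 := by omega
    have : B.2 = A.2 := by omega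
    exact Prod.ext (by omega) (by omega)
  have hgpos : 0 < g := by
    rcases Nat.eq_zero_or_pos g with h0 | h0
    · exfalso; have := Int.gcd_eq_zero_iff.mp h0; exact hd this
    · exact h0
  have h1 : (g : ℤ) ∣ d1 := Int.gcd_dvd_left d1 d2
  have h2 : (g : ℤ) ∣ d2 := Int.gcd_dvd_right d1 d2
  obtain ⟨e1, he1⟩ := h1
  obtain ⟨e2, he2⟩ := h2
  set C : ℤ × ℤ := (A.1 + e1, A.2 + e2) with hC
  have hgR : (0:ℝ) < (g:ℝ) := by exact_mod_cast hgpos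
  have hmem : toR C ∈ segment ℝ (toR A) (toR B) := by
    refine ⟨1 - 1/(g:ℝ), 1/(g:ℝ), ?_, ?_, by ring, ?_⟩
    · have : 1/(g:ℝ) ≤ 1 := by
        rw [div_le_one hgR]; exact_mod_cast hgpos
      linarith
    · positivity
    · have hb1 : (B.1 : ℝ) = (A.1 : ℝ) + (g:ℝ) * (e1:ℝ) := by
        have : (d1 : ℝ) = (g:ℝ) * (e1:ℝ) := by exact_mod_cast he1
        rw [hd1] at this; push_cast at this ⊢; linarith
      have hb2 : (B.2 : ℝ) = (A.2 : ℝ) + (g:ℝ) * (e2:ℝ) := by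
        have : (d2 : ℝ) = (g:ℝ) * (e2:ℝ) := by exact_mod_cast he2
        rw [hd2] at this; push_cast at this ⊢; linarith
      show ((1 - 1/(g:ℝ)) • (toR A) + (1/(g:ℝ)) • (toR B)) = toR C
      have hgne : (g:ℝ) ≠ 0 := ne_of_gt hgR
      apply Prod.ext
      · show (1 - 1/(g:ℝ)) * (A.1:ℝ) + (1/(g:ℝ)) * (B.1:ℝ) = ((A.1 + e1 : ℤ) : ℝ)
        push_cast; rw [hb1]; field_simp; ring
      · show (1 - 1/(g:ℝ)) * (A.2:ℝ) + (1/(g:ℝ)) * (B.2:ℝ) = ((A.2 + e2 : ℤ) : ℝ)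
        push_cast; rw [hb2]; field_simp; ring
  rcases hseg C hmem with hCA | hCB
  · exfalso
    have h1 : e1 = 0 := by have := congrArg Prod.fst hCA; simp [hC] at this; omega
    have h2 : e2 = 0 := by have := congrArg Prod.snd hCA; simp [hC] at this; omega
    exact hd ⟨by rw [he1, h1, mul_zero], by rw [he2, h2, mul_zero]⟩
  · have h1 : e1 = d1 := by have := congrArg Prod.fst hCB; simp [hC] at this; omega
    have h2 : e2 = d2 := by have := congrArg Prod.snd hCB; simp [hC] at this; omega
    -- d1 = g * d1, d2 = g * d2; since not both zero, g = 1
    rw [h1] at he1; rw [h2] at he2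
    by_contra hg1
    have hg2 : 2 ≤ (g:ℤ) := by omega
    have : d1 = 0 := by nlinarith [he1]
    have : d2 = 0 := by nlinarith [he2]
    exact hd ⟨by assumption, by assumption⟩

/-- If Det A B X = 0 and direction is primitive, X lies on the integer line through A, B. -/
lemma on_line (A B X : ℤ × ℤ) (hcop : IsCoprime (B.1 - A.1) (B.2 - A.2))
    (h0 : Det A B X = 0) :
    ∃ t : ℤ, X.1 - A.1 = t * (B.1 - A.1) ∧ X.2 - A.2 = t * (B.2 - A.2) := by
  set d1 := B.1 - A.1
  set d2 := B.2 - A.2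
  set u := X.1 - A.1
  set v := X.2 - A.2
  have key : d1 * v = d2 * u := by simp only [Det] at h0; linear_combination h0
  by_cases hd1 : d1 = 0
  · have hu : IsUnit d2 := by
      rw [hd1] at hcop; exact (isCoprime_zero_left).mp hcop
    have hd2 : d2 = 1 ∨ d2 = -1 := Int.isUnit_iff.mp hu
    have hu0 : u = 0 := by
      rcases hd2 with h | h <;> rw [hd1] at key <;> rw [h] at key <;> omega
    refine ⟨v * d2, ?_, ?_⟩
    · rw [hu0, hd1, mul_zero]
    · rcases hd2 with h | h <;> rw [h] <;> ring
  · have hdvd : d1 ∣ u := by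
      have : d1 ∣ d2 * u := ⟨v, key.symm⟩
      exact hcop.dvd_of_dvd_mul_left this
    obtain ⟨t, ht⟩ := hdvd
    refine ⟨t, by rw [ht]; ring, ?_⟩
    have : d1 * v = d1 * (t * d2) := by rw [key, ht]; ring
    exact mul_left_cancel₀ hd1 this

/-- the function defined by an oriented prime segment AB in the
grid is a threshold function: some affine function a1·x + a2·y − a0 is
nonnegative exactly on its true points. -/
theorem stmt4 (m n : ℕ) (A B : ℤ × ℤ)
    (hA : A ∈ Grid m n) (hB : B ∈ Grid m n) (hadj : Adjacent A B) :
    ∃ a0 a1 a2 : ℝ, ∀ X ∈ Grid m n,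
      (fseg A B X = true ↔ a1 * (X.1 : ℝ) + a2 * (X.2 : ℝ) - a0 ≥ 0) := by
  have hcop := adj_coprime A B hadj
  obtain ⟨hne, -⟩ := hadj
  set d1 : ℤ := B.1 - A.1 with hd1
  set d2 : ℤ := B.2 - A.2 with hd2
  set K : ℝ := (|d1| + |d2| : ℤ) * (m + n) + 1 with hK
  have hKpos : 0 < K := by
    have : (0:ℝ) ≤ ((|d1| + |d2| : ℤ) : ℝ) := by positivity
    have : (0:ℝ) ≤ ((|d1| + |d2| : ℤ) : ℝ) * (m + n) := by positivity
    linarith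
  set ε : ℝ := 1 / (2 * K) with hε
  have hεpos : 0 < ε := by positivity
  refine ⟨((d1 * A.2 - d2 * A.1 : ℤ) : ℝ) - ε * ((d1 * A.1 + d2 * A.2 : ℤ) : ℝ),
    ((-d2 : ℤ) : ℝ) - ε * (d1 : ℝ), (d1 : ℝ) - ε * (d2 : ℝ), ?_⟩
  intro X hX
  obtain ⟨hx0, hx1, hy0, hy1⟩ := hX
  obtain ⟨hax0, hax1, hay0, hay1⟩ := hA
  set L : ℤ := Det A B X with hL
  set s : ℤ := d1 * (X.1 - A.1) + d2 * (X.2 - A.2) with hs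
  have hident : (((-d2 : ℤ) : ℝ) - ε * (d1 : ℝ)) * (X.1 : ℝ) + ((d1 : ℝ) - ε * (d2 : ℝ)) * (X.2 : ℝ)
      - (((d1 * A.2 - d2 * A.1 : ℤ) : ℝ) - ε * ((d1 * A.1 + d2 * A.2 : ℤ) : ℝ))
      = (L : ℝ) - ε * (s : ℝ) := by
    simp only [hL, hs, Det, hd1, hd2]
    push_cast
    ring
  rw [hident]
  -- bound on s
  have hsb : |(s : ℝ)| < K := by
    have h1 : |(X.1 - A.1 : ℤ)| < (m : ℤ) := by rw [abs_lt]; omega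
    have h2 : |(X.2 - A.2 : ℤ)| < (n : ℤ) := by rw [abs_lt]; omega
    have hb : |s| ≤ |d1| * (m : ℤ) + |d2| * (n : ℤ) := by
      calc |s| ≤ |d1 * (X.1 - A.1)| + |d2 * (X.2 - A.2)| := abs_add_le _ _
        _ = |d1| * |X.1 - A.1| + |d2| * |X.2 - A.2| := by rw [abs_mul, abs_mul]
        _ ≤ |d1| * (m : ℤ) + |d2| * (n : ℤ) :=
            add_le_add (mul_le_mul_of_nonneg_left h1.le (abs_nonneg d1))
              (mul_le_mul_of_nonneg_left h2.le (abs_nonneg d2))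
    have hb2 : |d1| * (m : ℤ) + |d2| * (n : ℤ) ≤ (|d1| + |d2|) * (m + n) := by
      have : (0:ℤ) ≤ |d1| := abs_nonneg _
      have : (0:ℤ) ≤ |d2| := abs_nonneg _
      nlinarith [Int.ofNat_nonneg m, Int.ofNat_nonneg n]
    have : |s| < (|d1| + |d2|) * (m + n) + 1 := by omega
    calc |(s:ℝ)| = |(s:ℤ)| := by rw [Int.cast_abs]
      _ < K := by rw [hK]; exact_mod_cast (by push_cast; exact_mod_cast this : ((|s| : ℤ) : ℝ) < ((|d1| + |d2|) * (m + n) + 1 : ℤ))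
  have hεs : |ε * (s : ℝ)| < 1 / 2 := by
    rw [abs_mul, abs_of_pos hεpos, hε]
    rw [div_mul_eq_mul_div, one_mul, div_lt_div_iff₀ (by linarith) (by norm_num)]
    linarith
  have hεs1 : ε * (s : ℝ) < 1/2 := (abs_lt.mp hεs).2
  have hεs2 : -(1/2) < ε * (s : ℝ) := (abs_lt.mp hεs).1
  by_cases h0 : L = 0
  · -- on the line
    obtain ⟨t, ht1, ht2⟩ := on_line A B X hcop h0
    have hst : s = t * (d1 ^ 2 + d2 ^ 2) := by rw [hs, ht1, ht2]; ring
    have hdpos : 0 < d1 ^ 2 + d2 ^ 2 := by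
      rcases (by by_contra hc; push_neg at hc; exact hne (Prod.ext (by omega) (by omega)) :
        d1 ≠ 0 ∨ d2 ≠ 0) with h | h <;> positivity
    have hcloser : fseg A B X = true ↔ t ≤ 0 := by
      rw [fseg, if_pos h0, decide_eq_true_eq]
      have e1 : X.1 - A.1 = t * d1 := ht1
      have e2 : X.2 - A.2 = t * d2 := ht2
      have e3 : X.1 - B.1 = (t - 1) * d1 := by simp only [hd1]; linear_combination ht1
      have e4 : X.2 - B.2 = (t - 1) * d2 := by simp only [hd2]; linear_combination ht2
      rw [e1, e2, e3, e4]
      constructor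
      · intro hlt; nlinarith
      · intro hlt; nlinarith
    rw [hcloser]
    have hLr : (L : ℝ) = 0 := by rw [h0]; norm_num
    clear_value K ε L s d1 d2
    constructor
    · intro ht
      have hsz : s ≤ 0 := by
        rw [hst]; exact mul_nonpos_of_nonpos_of_nonneg ht (le_of_lt hdpos)
      have hsr : (s : ℝ) ≤ 0 := by exact_mod_cast hsz
      have h2 : ε * (s : ℝ) ≤ 0 := mul_nonpos_of_nonneg_of_nonpos (le_of_lt hεpos) hsr
      linarith only [hLr, h2]
    · intro hge
      have hsle : ε * (s : ℝ) ≤ 0 := by linarith only [hge, hLr]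
      have hsr : (s : ℝ) ≤ 0 := by
        by_contra hc; push_neg at hc
        have := mul_pos hεpos hc
        linarith only [hsle, this]
      have hsz : s ≤ 0 := by exact_mod_cast hsr
      by_contra hcon
      push_neg at hcon
      have : 0 < s := by rw [hst]; exact mul_pos hcon hdpos
      omega
  · -- off the line
    have hfs : fseg A B X = true ↔ 0 < L := by
      rw [fseg]
      rw [if_neg (by rw [← hL]; exact h0)]
      rw [decide_eq_true_eq, ← hL]
    rw [hfs]
    clear_value K ε L s d1 d2
    constructor
    · intro hpos
      have h1 : (1:ℝ) ≤ (L:ℝ) := by exact_mod_cast hpos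
      linarith only [h1, hεs1]
    · intro hge
      by_contra hc
      push_neg at hc
      have hL1 : L ≤ -1 := by omega
      have h1 : (L:ℝ) ≤ -1 := by exact_mod_cast hL1
      linarith only [h1, hεs2, hge]
end

section
/- Let AB and CD be prime segments such that the convex hull of {A,B,C,D} is a (nondegenerate) triangle. Then the pair {AB, CD} is proper if and only if either (the oriented triangle CDB is counterclockwise and A lies on segment BD) or (the oriented triangle ABD is counterclockwise and C lies on segment BD). -/
lemma toR_inj {P Q : ℤ × ℤ} (h : toR P = toR Q) : P = Q := by
  have h1 := congrArg Prod.fst h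
  have h2 := congrArg Prod.snd h
  simp only [toR] at h1 h2
  exact Prod.ext (by exact_mod_cast h1) (by exact_mod_cast h2)

lemma fseg_iff (A B X : ℤ × ℤ) :
    fseg A B X = true ↔
      0 < Det A B X ∨ (Det A B X = 0 ∧
        (X.1 - A.1) ^ 2 + (X.2 - A.2) ^ 2 < (X.1 - B.1) ^ 2 + (X.2 - B.2) ^ 2) := by
  unfold fseg
  split_ifs with h
  · simp [h]
  · simp [h]

lemma detR (P Q R : ℤ × ℤ) :
    ((Det P Q R : ℤ) : ℝ) =
      ((Q.1 : ℝ) - (P.1 : ℝ)) * ((R.2 : ℝ) - (P.2 : ℝ)) -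
        ((Q.2 : ℝ) - (P.2 : ℝ)) * ((R.1 : ℝ) - (P.1 : ℝ)) := by
  simp only [Det]; push_cast; ring

lemma mem_segment_comp {x y z : ℝ × ℝ} :
    z ∈ segment ℝ x y ↔ ∃ u v : ℝ, 0 ≤ u ∧ 0 ≤ v ∧ u + v = 1 ∧
      z.1 = u * x.1 + v * y.1 ∧ z.2 = u * x.2 + v * y.2 := by
  constructor
  · rintro ⟨u, v, hu, hv, huv, h⟩
    refine ⟨u, v, hu, hv, huv, ?_, ?_⟩
    · have := congrArg Prod.fst h
      simpa using this.symm
    · have := congrArg Prod.snd h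
      simpa using this.symm
  · rintro ⟨u, v, hu, hv, huv, h1, h2⟩
    refine ⟨u, v, hu, hv, huv, ?_⟩
    refine Prod.ext ?_ ?_
    · simp only [Prod.fst_add, Prod.smul_fst, smul_eq_mul]
      rw [h1]
    · simp only [Prod.snd_add, Prod.smul_snd, smul_eq_mul]
      rw [h2]

lemma collinear_of_two_dets {P Q R S : ℤ × ℤ} (hPQ : P ≠ Q)
    (h1 : Det P Q R = 0) (h2 : Det P Q S = 0) :
    Collinear ℝ ({toR P, toR Q, toR R, toR S} : Set (ℝ × ℝ)) := by
  have hN : (0:ℝ) < ((Q.1:ℝ) - P.1) ^ 2 + ((Q.2:ℝ) - P.2) ^ 2 := by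
    rcases (by
      by_contra hc
      push_neg at hc
      exact hPQ (Prod.ext (by exact_mod_cast hc.1.symm) (by exact_mod_cast hc.2.symm)) :
      (Q.1:ℝ) ≠ P.1 ∨ (Q.2:ℝ) ≠ P.2) with h | h
    · have := sub_ne_zero.2 h
      positivity
    · have := sub_ne_zero.2 h
      positivity
  rw [collinear_iff_of_mem (Set.mem_insert (toR P) _)]
  refine ⟨toR Q - toR P, ?_⟩
  intro p hp
  have key : ∀ X : ℤ × ℤ, Det P Q X = 0 →
      ∃ r : ℝ, toR X = r • (toR Q - toR P) +ᵥ toR P := by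
    intro X hX
    have hXc : ((Q.1:ℝ) - P.1) * ((X.2:ℝ) - P.2) - ((Q.2:ℝ) - P.2) * ((X.1:ℝ) - P.1) = 0 := by
      rw [← detR]; exact_mod_cast congrArg (fun n : ℤ => (n:ℝ)) hX
    refine ⟨(((Q.1:ℝ) - P.1) * ((X.1:ℝ) - P.1) + ((Q.2:ℝ) - P.2) * ((X.2:ℝ) - P.2)) /
      (((Q.1:ℝ) - P.1) ^ 2 + ((Q.2:ℝ) - P.2) ^ 2), ?_⟩
    have hN' := hN.ne'
    refine Prod.ext ?_ ?_
    · show (X.1:ℝ) = _ / _ * ((Q.1:ℝ) - P.1) + (P.1:ℝ)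
      field_simp
      linear_combination (-((Q.2:ℝ) - P.2)) * hXc
    · show (X.2:ℝ) = _ / _ * ((Q.2:ℝ) - P.2) + (P.2:ℝ)
      field_simp
      linear_combination ((Q.1:ℝ) - P.1) * hXc
  rcases hp with rfl | rfl | rfl | rfl
  · exact ⟨0, by simp⟩
  · exact ⟨1, by simp⟩
  · exact key R h1
  · exact key S h2

lemma collinear_step {S : Set (ℝ × ℝ)} {x u v : ℝ × ℝ} (hxS : x ∈ S)
    (hx : x ∈ convexHull ℝ (S \ {x})) (hsub : S \ {x} ⊆ {u, v}) :
    Collinear ℝ S := by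
  have h1 : Collinear ℝ (S \ {x}) := (collinear_pair ℝ u v).subset hsub
  have h2 : x ∈ affineSpan ℝ (S \ {x}) := convexHull_subset_affineSpan _ hx
  have h3 : Collinear ℝ (insert x (S \ {x})) :=
    (collinear_insert_iff_of_mem_affineSpan h2).2 h1
  rwa [Set.insert_diff_singleton, Set.insert_eq_self.2 hxS] at h3

lemma mem_hull_triple {a b c d : ℝ × ℝ}
    (h : a ∈ convexHull ℝ ({b, c, d} : Set (ℝ × ℝ))) :
    ∃ α β γ : ℝ, 0 ≤ α ∧ 0 ≤ β ∧ 0 ≤ γ ∧ α + β + γ = 1 ∧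
      a.1 = α * b.1 + β * c.1 + γ * d.1 ∧ a.2 = α * b.2 + β * c.2 + γ * d.2 := by
  rw [show ({b, c, d} : Set (ℝ × ℝ)) = insert b {c, d} from rfl,
    convexHull_insert ⟨c, by simp⟩, convexHull_pair] at h
  rw [mem_convexJoin] at h
  obtain ⟨p, hp, z, hz, haz⟩ := h
  rw [Set.mem_singleton_iff] at hp
  obtain ⟨u, v, hu, hv, huv, hzz⟩ := hz
  obtain ⟨s, t, hs, ht, hst, ha⟩ := haz
  rw [hp] at ha
  have hz1 : z.1 = u * c.1 + v * d.1 := by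
    have := congrArg Prod.fst hzz; simpa using this.symm
  have hz2 : z.2 = u * c.2 + v * d.2 := by
    have := congrArg Prod.snd hzz; simpa using this.symm
  have ha1 : a.1 = s * b.1 + t * z.1 := by
    have := congrArg Prod.fst ha; simpa using this.symm
  have ha2 : a.2 = s * b.2 + t * z.2 := by
    have := congrArg Prod.snd ha; simpa using this.symm
  refine ⟨s, t * u, t * v, hs, by positivity, by positivity,
    by linear_combination hst + t * huv, ?_, ?_⟩
  · rw [ha1, hz1]; ring
  · rw [ha2, hz2]; ring

set_option maxHeartbeats 2000000 in
/-- for prime segments AB, CD whose four endpoints have a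
(nondegenerate) triangle as convex hull, the pair {AB, CD} is proper iff either
(the triangle CDB is counterclockwise and A ∈ BD) or (the triangle ABD is
counterclockwise and C ∈ BD). -/
theorem stmt10 (A B C D : ℤ × ℤ)
    (hAB : Adjacent A B) (hCD : Adjacent C D)
    (hncol : ¬ Collinear ℝ ({toR A, toR B, toR C, toR D} : Set (ℝ × ℝ)))
    (htri : ∃ x ∈ ({toR A, toR B, toR C, toR D} : Set (ℝ × ℝ)),
      x ∈ convexHull ℝ (({toR A, toR B, toR C, toR D} : Set (ℝ × ℝ)) \ {x})) :
    (ProperPair A B C D ↔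
      ((0 < Det C D B ∧ toR A ∈ segment ℝ (toR B) (toR D)) ∨
        (0 < Det A B D ∧ toR C ∈ segment ℝ (toR B) (toR D)))) := by
  have hABne : A ≠ B := hAB.1
  have hCDne : C ≠ D := hCD.1
  have hAD : toR A ≠ toR D := by
    intro h
    apply hncol
    obtain ⟨x, hxS, hx⟩ := htri
    have hxS' := hxS
    simp only [Set.mem_insert_iff, Set.mem_singleton_iff] at hxS'
    rcases hxS' with rfl | rfl | rfl | rfl
    · exact collinear_step (u := toR B) (v := toR C) hxS hx (by
        intro y hy
        simp only [h, Set.mem_diff, Set.mem_insert_iff, Set.mem_singleton_iff] at hy ⊢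
        tauto)
    · exact collinear_step (u := toR A) (v := toR C) hxS hx (by
        intro y hy
        simp only [h, Set.mem_diff, Set.mem_insert_iff, Set.mem_singleton_iff] at hy ⊢
        tauto)
    · exact collinear_step (u := toR A) (v := toR B) hxS hx (by
        intro y hy
        simp only [h, Set.mem_diff, Set.mem_insert_iff, Set.mem_singleton_iff] at hy ⊢
        tauto)
    · exact collinear_step (u := toR B) (v := toR C) hxS hx (by
        intro y hy
        simp only [h, Set.mem_diff, Set.mem_insert_iff, Set.mem_singleton_iff] at hy ⊢
        tauto)
  have hBC : toR B ≠ toR C := by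
    intro h
    apply hncol
    obtain ⟨x, hxS, hx⟩ := htri
    have hxS' := hxS
    simp only [Set.mem_insert_iff, Set.mem_singleton_iff] at hxS'
    rcases hxS' with rfl | rfl | rfl | rfl
    · exact collinear_step (u := toR C) (v := toR D) hxS hx (by
        intro y hy
        simp only [h, Set.mem_diff, Set.mem_insert_iff, Set.mem_singleton_iff] at hy ⊢
        tauto)
    · exact collinear_step (u := toR A) (v := toR D) hxS hx (by
        intro y hy
        simp only [h, Set.mem_diff, Set.mem_insert_iff, Set.mem_singleton_iff] at hy ⊢
        tauto)
    · exact collinear_step (u := toR A) (v := toR D) hxS hx (by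
        intro y hy
        simp only [h, Set.mem_diff, Set.mem_insert_iff, Set.mem_singleton_iff] at hy ⊢
        tauto)
    · exact collinear_step (u := toR A) (v := toR C) hxS hx (by
        intro y hy
        simp only [h, Set.mem_diff, Set.mem_insert_iff, Set.mem_singleton_iff] at hy ⊢
        tauto)
  constructor
  · rintro ⟨-, -, h1, h2, h3, h4⟩
    rw [fseg_iff] at h1 h2 h3 h4
    obtain ⟨x, hxS, hx⟩ := htri
    simp only [Set.mem_insert_iff, Set.mem_singleton_iff] at hxS
    rcases hxS with rfl | rfl | rfl | rfl
    · -- A in hull of {B, C, D}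
      have hx' : toR A ∈ convexHull ℝ ({toR B, toR C, toR D} : Set (ℝ × ℝ)) := by
        refine convexHull_mono ?_ hx
        intro y hy
        simp only [Set.mem_diff, Set.mem_insert_iff, Set.mem_singleton_iff] at hy ⊢
        tauto
      obtain ⟨α, β, γ, hα, hβ, hγ, hsum, hc1', hc2'⟩ := mem_hull_triple hx'
      have hc1 : (A.1:ℝ) = α * B.1 + β * C.1 + γ * D.1 := hc1'
      have hc2 : (A.2:ℝ) = α * B.2 + β * C.2 + γ * D.2 := hc2'
      have hγe : γ = 1 - α - β := by linarith
      rw [hγe] at hc1 hc2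
      have e1R : ((Det C D A : ℤ) : ℝ) = α * ((Det C D B : ℤ) : ℝ) := by
        rw [detR, detR, hc1, hc2]; ring
      have d2R : ((Det A B D : ℤ) : ℝ) = -β * ((Det C D B : ℤ) : ℝ) := by
        rw [detR, detR, hc1, hc2]; ring
      have hT : Det C D B ≠ 0 := by
        intro h0
        apply hncol
        have hA0 : Det C D A = 0 := by
          have : ((Det C D A : ℤ) : ℝ) = 0 := by rw [e1R, h0]; norm_num
          exact_mod_cast this
        exact (collinear_of_two_dets hCDne hA0 h0).subset (by
          intro y hy
          simp only [Set.mem_insert_iff, Set.mem_singleton_iff] at hy ⊢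
          tauto)
      have hTpos : 0 < Det C D B := by
        rcases h2 with hpos | ⟨h0, _⟩
        · exact hpos
        · exact absurd h0 hT
      have hTposR : (0:ℝ) < ((Det C D B : ℤ) : ℝ) := by exact_mod_cast hTpos
      have hβ0 : β = 0 := by
        rcases h4 with hpos | ⟨h0, _⟩
        · have hposR : (0:ℝ) < ((Det A B D : ℤ) : ℝ) := by exact_mod_cast hpos
          nlinarith [mul_nonneg hβ hTposR.le, hposR, d2R]
        · have h0R : ((Det A B D : ℤ) : ℝ) = 0 := by exact_mod_cast h0
          rw [d2R] at h0R
          rcases mul_eq_zero.1 h0R with hh | hh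
          · linarith
          · linarith
      left
      refine ⟨hTpos, mem_segment_comp.2 ⟨α, 1 - α, hα, by linarith, by ring, ?_, ?_⟩⟩
      · show (A.1:ℝ) = α * (B.1:ℝ) + (1 - α) * (D.1:ℝ)
        rw [hc1, hβ0]; ring
      · show (A.2:ℝ) = α * (B.2:ℝ) + (1 - α) * (D.2:ℝ)
        rw [hc2, hβ0]; ring
    · -- B in hull of {A, C, D} : contradiction
      have hx' : toR B ∈ convexHull ℝ ({toR A, toR C, toR D} : Set (ℝ × ℝ)) := by
        refine convexHull_mono ?_ hx
        intro y hy
        simp only [Set.mem_diff, Set.mem_insert_iff, Set.mem_singleton_iff] at hy ⊢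
        tauto
      obtain ⟨α, β, γ, hα, hβ, hγ, hsum, hc1', hc2'⟩ := mem_hull_triple hx'
      have hc1 : (B.1:ℝ) = α * A.1 + β * C.1 + γ * D.1 := hc1'
      have hc2 : (B.2:ℝ) = α * A.2 + β * C.2 + γ * D.2 := hc2'
      have hγe : γ = 1 - α - β := by linarith
      rw [hγe] at hc1 hc2
      have d1R : ((Det A B C : ℤ) : ℝ) = -(1 - α - β) * ((Det A C D : ℤ) : ℝ) := by
        rw [detR, detR, hc1, hc2]; ring
      have d2R : ((Det A B D : ℤ) : ℝ) = β * ((Det A C D : ℤ) : ℝ) := by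
        rw [detR, detR, hc1, hc2]; ring
      have hcyc : Det C D A = Det A C D := by simp only [Det]; ring
      have hT : Det A C D ≠ 0 := by
        intro h0
        apply hncol
        have hC0 : Det A B C = 0 := by
          have : ((Det A B C : ℤ) : ℝ) = 0 := by rw [d1R, h0]; norm_num
          exact_mod_cast this
        have hD0 : Det A B D = 0 := by
          have : ((Det A B D : ℤ) : ℝ) = 0 := by rw [d2R, h0]; norm_num
          exact_mod_cast this
        exact collinear_of_two_dets hABne hC0 hD0
      have hTposR : (0:ℝ) < ((Det A C D : ℤ) : ℝ) := by
        have hTpos : 0 < Det A C D := by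
          rcases h1 with hpos | ⟨h0, _⟩
          · rwa [hcyc] at hpos
          · rw [hcyc] at h0; exact absurd h0 hT
        exact_mod_cast hTpos
      exfalso
      rcases h3 with hpos | ⟨h0, hdist⟩
      · have hposR : (0:ℝ) < ((Det A B C : ℤ) : ℝ) := by exact_mod_cast hpos
        have hγ' : (0:ℝ) ≤ 1 - α - β := by linarith
        nlinarith [mul_nonneg hγ' hTposR.le, hposR, d1R]
      · have h0R : ((Det A B C : ℤ) : ℝ) = 0 := by exact_mod_cast h0
        rw [d1R] at h0R
        have hg : (1:ℝ) - α - β = 0 := by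
          rcases mul_eq_zero.1 h0R with hh | hh
          · linarith
          · linarith
        have k1 : (C.1:ℝ) - B.1 = α * ((C.1:ℝ) - A.1) := by
          rw [hc1]; linear_combination ((C.1:ℝ) - (D.1:ℝ)) * hg
        have k2 : (C.2:ℝ) - B.2 = α * ((C.2:ℝ) - A.2) := by
          rw [hc2]; linear_combination ((C.2:ℝ) - (D.2:ℝ)) * hg
        have hdR : ((C.1:ℝ) - A.1)^2 + ((C.2:ℝ) - A.2)^2 <
            ((C.1:ℝ) - B.1)^2 + ((C.2:ℝ) - B.2)^2 := by exact_mod_cast hdist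
        rw [k1, k2] at hdR
        have hX : (0:ℝ) ≤ ((C.1:ℝ) - A.1)^2 + ((C.2:ℝ) - A.2)^2 := by positivity
        have hα1 : α ≤ 1 := by linarith
        have hsq : α^2 ≤ 1 := by nlinarith
        nlinarith [mul_le_mul_of_nonneg_right hsq hX, hdR, hX]
    · -- C in hull of {A, B, D}
      have hx' : toR C ∈ convexHull ℝ ({toR A, toR B, toR D} : Set (ℝ × ℝ)) := by
        refine convexHull_mono ?_ hx
        intro y hy
        simp only [Set.mem_diff, Set.mem_insert_iff, Set.mem_singleton_iff] at hy ⊢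
        tauto
      obtain ⟨α, β, γ, hα, hβ, hγ, hsum, hc1', hc2'⟩ := mem_hull_triple hx'
      have hc1 : (C.1:ℝ) = α * A.1 + β * B.1 + γ * D.1 := hc1'
      have hc2 : (C.2:ℝ) = α * A.2 + β * B.2 + γ * D.2 := hc2'
      have hγe : γ = 1 - α - β := by linarith
      rw [hγe] at hc1 hc2
      have d1R : ((Det A B C : ℤ) : ℝ) = (1 - α - β) * ((Det A B D : ℤ) : ℝ) := by
        rw [detR, detR, hc1, hc2]; ring
      have e2R : ((Det C D B : ℤ) : ℝ) = -α * ((Det A B D : ℤ) : ℝ) := by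
        rw [detR, detR, hc1, hc2]; ring
      have hT : Det A B D ≠ 0 := by
        intro h0
        apply hncol
        have hC0 : Det A B C = 0 := by
          have : ((Det A B C : ℤ) : ℝ) = 0 := by rw [d1R, h0]; norm_num
          exact_mod_cast this
        exact collinear_of_two_dets hABne hC0 h0
      have hTpos : 0 < Det A B D := by
        rcases h4 with hpos | ⟨h0, _⟩
        · exact hpos
        · exact absurd h0 hT
      have hTposR : (0:ℝ) < ((Det A B D : ℤ) : ℝ) := by exact_mod_cast hTpos
      have hα0 : α = 0 := by
        rcases h2 with hpos | ⟨h0, _⟩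
        · have hposR : (0:ℝ) < ((Det C D B : ℤ) : ℝ) := by exact_mod_cast hpos
          nlinarith [mul_nonneg hα hTposR.le, hposR, e2R]
        · have h0R : ((Det C D B : ℤ) : ℝ) = 0 := by exact_mod_cast h0
          rw [e2R] at h0R
          rcases mul_eq_zero.1 h0R with hh | hh
          · linarith
          · linarith
      right
      refine ⟨hTpos, mem_segment_comp.2 ⟨β, 1 - β, hβ, by linarith, by ring, ?_, ?_⟩⟩
      · show (C.1:ℝ) = β * (B.1:ℝ) + (1 - β) * (D.1:ℝ)
        rw [hc1, hα0]; ring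
      · show (C.2:ℝ) = β * (B.2:ℝ) + (1 - β) * (D.2:ℝ)
        rw [hc2, hα0]; ring
    · -- D in hull of {A, B, C} : contradiction
      have hx' : toR D ∈ convexHull ℝ ({toR A, toR B, toR C} : Set (ℝ × ℝ)) := by
        refine convexHull_mono ?_ hx
        intro y hy
        simp only [Set.mem_diff, Set.mem_insert_iff, Set.mem_singleton_iff] at hy ⊢
        tauto
      obtain ⟨α, β, γ, hα, hβ, hγ, hsum, hc1', hc2'⟩ := mem_hull_triple hx'
      have hc1 : (D.1:ℝ) = α * A.1 + β * B.1 + γ * C.1 := hc1'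
      have hc2 : (D.2:ℝ) = α * A.2 + β * B.2 + γ * C.2 := hc2'
      have hγe : γ = 1 - α - β := by linarith
      rw [hγe] at hc1 hc2
      have d2R : ((Det A B D : ℤ) : ℝ) = (1 - α - β) * ((Det A B C : ℤ) : ℝ) := by
        rw [detR, detR, hc1, hc2]; ring
      have e1R : ((Det C D A : ℤ) : ℝ) = -β * ((Det A B C : ℤ) : ℝ) := by
        rw [detR, detR, hc1, hc2]; ring
      have hT : Det A B C ≠ 0 := by
        intro h0
        apply hncol
        have hD0 : Det A B D = 0 := by
          have : ((Det A B D : ℤ) : ℝ) = 0 := by rw [d2R, h0]; norm_num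
          exact_mod_cast this
        exact collinear_of_two_dets hABne h0 hD0
      have hTpos : 0 < Det A B C := by
        rcases h3 with hpos | ⟨h0, _⟩
        · exact hpos
        · exact absurd h0 hT
      have hTposR : (0:ℝ) < ((Det A B C : ℤ) : ℝ) := by exact_mod_cast hTpos
      exfalso
      rcases h1 with hpos | ⟨h0, hdist⟩
      · have hposR : (0:ℝ) < ((Det C D A : ℤ) : ℝ) := by exact_mod_cast hpos
        nlinarith [mul_nonneg hβ hTposR.le, hposR, e1R]
      · have h0R : ((Det C D A : ℤ) : ℝ) = 0 := by exact_mod_cast h0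
        rw [e1R] at h0R
        have hβ0 : β = 0 := by
          rcases mul_eq_zero.1 h0R with hh | hh
          · linarith
          · linarith
        have k1 : (A.1:ℝ) - D.1 = (1 - α) * ((A.1:ℝ) - C.1) := by
          rw [hc1, hβ0]; ring
        have k2 : (A.2:ℝ) - D.2 = (1 - α) * ((A.2:ℝ) - C.2) := by
          rw [hc2, hβ0]; ring
        have hdR : ((A.1:ℝ) - C.1)^2 + ((A.2:ℝ) - C.2)^2 <
            ((A.1:ℝ) - D.1)^2 + ((A.2:ℝ) - D.2)^2 := by exact_mod_cast hdist
        rw [k1, k2] at hdR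
        have hX : (0:ℝ) ≤ ((A.1:ℝ) - C.1)^2 + ((A.2:ℝ) - C.2)^2 := by positivity
        have hγ'' : (0:ℝ) ≤ 1 - α := by linarith
        have hsq : (1 - α)^2 ≤ 1 := by nlinarith
        nlinarith [mul_le_mul_of_nonneg_right hsq hX, hdR, hX]
  · rintro (⟨hdet, hseg⟩ | ⟨hdet, hseg⟩)
    · obtain ⟨u, v, hu, hv, huv, hs1', hs2'⟩ := mem_segment_comp.1 hseg
      have hs1 : (A.1:ℝ) = u * B.1 + v * D.1 := hs1'
      have hs2 : (A.2:ℝ) = u * B.2 + v * D.2 := hs2'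
      have hve : v = 1 - u := by linarith
      rw [hve] at hs1 hs2
      have hdetR : (0:ℝ) < ((Det C D B : ℤ) : ℝ) := by exact_mod_cast hdet
      have hu1 : u < 1 := by
        rcases eq_or_lt_of_le (by linarith : u ≤ 1) with h | h
        · exfalso
          apply hABne
          apply toR_inj
          refine Prod.ext ?_ ?_
          · show (A.1:ℝ) = (B.1:ℝ)
            rw [hs1, h]; ring
          · show (A.2:ℝ) = (B.2:ℝ)
            rw [hs2, h]; ring
        · exact h
      have hu0 : 0 < u := by
        rcases eq_or_lt_of_le hu with h | h
        · exfalso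
          apply hAD
          refine Prod.ext ?_ ?_
          · show (A.1:ℝ) = (D.1:ℝ)
            rw [hs1, ← h]; ring
          · show (A.2:ℝ) = (D.2:ℝ)
            rw [hs2, ← h]; ring
        · exact h
      refine ⟨hAB, hCD, ?_, ?_, ?_, ?_⟩
      · rw [fseg_iff]; left
        have hq : ((Det C D A : ℤ) : ℝ) = u * ((Det C D B : ℤ) : ℝ) := by
          rw [detR, detR, hs1, hs2]; ring
        have hpos : (0:ℝ) < ((Det C D A : ℤ) : ℝ) := by
          rw [hq]; exact mul_pos hu0 hdetR
        exact_mod_cast hpos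
      · rw [fseg_iff]; left; exact hdet
      · rw [fseg_iff]; left
        have hq : ((Det A B C : ℤ) : ℝ) = (1 - u) * ((Det C D B : ℤ) : ℝ) := by
          rw [detR, detR, hs1, hs2]; ring
        have hpos : (0:ℝ) < ((Det A B C : ℤ) : ℝ) := by
          rw [hq]; exact mul_pos (by linarith) hdetR
        exact_mod_cast hpos
      · rw [fseg_iff]; right
        constructor
        · have hq : ((Det A B D : ℤ) : ℝ) = 0 := by
            rw [detR, hs1, hs2]; ring
          exact_mod_cast hq
        · have k1 : (D.1:ℝ) - A.1 = u * ((D.1:ℝ) - B.1) := by rw [hs1]; ring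
          have k2 : (D.2:ℝ) - A.2 = u * ((D.2:ℝ) - B.2) := by rw [hs2]; ring
          have hS : (0:ℝ) < ((D.1:ℝ) - B.1)^2 + ((D.2:ℝ) - B.2)^2 := by
            by_contra hc
            push_neg at hc
            have e1 : (D.1:ℝ) = B.1 := by
              nlinarith [sq_nonneg ((D.1:ℝ) - B.1), sq_nonneg ((D.2:ℝ) - B.2)]
            have e2 : (D.2:ℝ) = B.2 := by
              nlinarith [sq_nonneg ((D.1:ℝ) - B.1), sq_nonneg ((D.2:ℝ) - B.2)]
            apply hABne
            apply toR_inj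
            refine Prod.ext ?_ ?_
            · show (A.1:ℝ) = (B.1:ℝ)
              rw [hs1, e1]; ring
            · show (A.2:ℝ) = (B.2:ℝ)
              rw [hs2, e2]; ring
          have hR : ((D.1:ℝ) - A.1)^2 + ((D.2:ℝ) - A.2)^2 <
              ((D.1:ℝ) - B.1)^2 + ((D.2:ℝ) - B.2)^2 := by
            rw [k1, k2]
            nlinarith [mul_pos (mul_pos (sub_pos.2 hu1) (by linarith : (0:ℝ) < 1 + u)) hS]
          exact_mod_cast hR
    · obtain ⟨u, v, hu, hv, huv, hs1', hs2'⟩ := mem_segment_comp.1 hseg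
      have hs1 : (C.1:ℝ) = u * B.1 + v * D.1 := hs1'
      have hs2 : (C.2:ℝ) = u * B.2 + v * D.2 := hs2'
      have hve : v = 1 - u := by linarith
      rw [hve] at hs1 hs2
      have hdetR : (0:ℝ) < ((Det A B D : ℤ) : ℝ) := by exact_mod_cast hdet
      have hu1 : u < 1 := by
        rcases eq_or_lt_of_le (by linarith : u ≤ 1) with h | h
        · exfalso
          apply hBC
          refine Prod.ext ?_ ?_
          · show (B.1:ℝ) = (C.1:ℝ)
            rw [hs1, h]; ring
          · show (B.2:ℝ) = (C.2:ℝ)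
            rw [hs2, h]; ring
        · exact h
      have hu0 : 0 < u := by
        rcases eq_or_lt_of_le hu with h | h
        · exfalso
          apply hCDne
          apply toR_inj
          refine Prod.ext ?_ ?_
          · show (C.1:ℝ) = (D.1:ℝ)
            rw [hs1, ← h]; ring
          · show (C.2:ℝ) = (D.2:ℝ)
            rw [hs2, ← h]; ring
        · exact h
      refine ⟨hAB, hCD, ?_, ?_, ?_, ?_⟩
      · rw [fseg_iff]; left
        have hq : ((Det C D A : ℤ) : ℝ) = u * ((Det A B D : ℤ) : ℝ) := by
          rw [detR, detR, hs1, hs2]; ring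
        have hpos : (0:ℝ) < ((Det C D A : ℤ) : ℝ) := by
          rw [hq]; exact mul_pos hu0 hdetR
        exact_mod_cast hpos
      · rw [fseg_iff]; right
        constructor
        · have hq : ((Det C D B : ℤ) : ℝ) = 0 := by
            rw [detR, hs1, hs2]; ring
          exact_mod_cast hq
        · have k1 : (B.1:ℝ) - C.1 = (1 - u) * ((B.1:ℝ) - D.1) := by rw [hs1]; ring
          have k2 : (B.2:ℝ) - C.2 = (1 - u) * ((B.2:ℝ) - D.2) := by rw [hs2]; ring
          have hS : (0:ℝ) < ((B.1:ℝ) - D.1)^2 + ((B.2:ℝ) - D.2)^2 := by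
            by_contra hc
            push_neg at hc
            have e1 : (B.1:ℝ) = D.1 := by
              nlinarith [sq_nonneg ((B.1:ℝ) - D.1), sq_nonneg ((B.2:ℝ) - D.2)]
            have e2 : (B.2:ℝ) = D.2 := by
              nlinarith [sq_nonneg ((B.1:ℝ) - D.1), sq_nonneg ((B.2:ℝ) - D.2)]
            apply hBC
            refine Prod.ext ?_ ?_
            · show (B.1:ℝ) = (C.1:ℝ)
              rw [hs1, e1]; ring
            · show (B.2:ℝ) = (C.2:ℝ)
              rw [hs2, e2]; ring
          have hR : ((B.1:ℝ) - C.1)^2 + ((B.2:ℝ) - C.2)^2 <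
              ((B.1:ℝ) - D.1)^2 + ((B.2:ℝ) - D.2)^2 := by
            rw [k1, k2]
            nlinarith [mul_pos (mul_pos hu0 (by linarith : (0:ℝ) < 2 - u)) hS]
          exact_mod_cast hR
      · rw [fseg_iff]; left
        have hq : ((Det A B C : ℤ) : ℝ) = (1 - u) * ((Det A B D : ℤ) : ℝ) := by
          rw [detR, detR, hs1, hs2]; ring
        have hpos : (0:ℝ) < ((Det A B C : ℤ) : ℝ) := by
          rw [hq]; exact mul_pos (by linarith) hdetR
        exact_mod_cast hpos
      · rw [fseg_iff]; left; exact hdet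
end

section
/- Let {AB, CD} be a proper pair of oriented prime segments. Then the segments AC and BD intersect (have a common point). Consequently, the function f = f_AB ∧ f_CD is not a threshold function (the convex hulls of its true points and of its false points intersect). -/
lemma det_nonneg {A B X : ℤ × ℤ} (h : fseg A B X = true) : 0 ≤ Det A B X := by
  unfold fseg at h
  by_cases h0 : Det A B X = 0
  · omega
  · rw [if_neg h0, decide_eq_true_eq] at h; omega

lemma close_of_fseg {A B X : ℤ × ℤ} (h : fseg A B X = true) (h0 : Det A B X = 0) :
    (X.1 - A.1) ^ 2 + (X.2 - A.2) ^ 2 < (X.1 - B.1) ^ 2 + (X.2 - B.2) ^ 2 := by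
  unfold fseg at h
  rw [if_pos h0, decide_eq_true_eq] at h; exact h

lemma fseg_snd (A B : ℤ × ℤ) : fseg A B B = false := by
  unfold fseg
  rw [if_pos (by unfold Det; ring)]
  simp only [decide_eq_false_iff_not, not_lt]
  nlinarith [sq_nonneg (B.1 - A.1), sq_nonneg (B.2 - A.2)]

lemma fseg_fst (A B : ℤ × ℤ) (hne : A ≠ B) : fseg A B A = true := by
  unfold fseg
  rw [if_pos (by unfold Det; ring)]
  simp only [decide_eq_true_eq]
  have h : A.1 ≠ B.1 ∨ A.2 ≠ B.2 := by
    by_contra hc; push_neg at hc; exact hne (Prod.ext hc.1 hc.2)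
  rcases h with h | h
  · have h1 : A.1 - B.1 ≠ 0 := sub_ne_zero.mpr h
    rcases h1.lt_or_gt with h2 | h2 <;> nlinarith [sq_nonneg (A.2 - B.2)]
  · have h1 : A.2 - B.2 ≠ 0 := sub_ne_zero.mpr h
    rcases h1.lt_or_gt with h2 | h2 <;> nlinarith [sq_nonneg (A.1 - B.1)]

lemma convex_le {a b x y t : ℝ} (ha : 0 ≤ a) (hb : 0 ≤ b) (hab : a + b = 1)
    (hx : t ≤ x) (hy : t ≤ y) : t ≤ a * x + b * y := by
  have h1 : a * t + b * t = t := by rw [← add_mul, hab, one_mul]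
  linarith [mul_le_mul_of_nonneg_left hx ha, mul_le_mul_of_nonneg_left hy hb]

lemma convex_lt {a b x y t : ℝ} (ha : 0 ≤ a) (hb : 0 ≤ b) (hab : a + b = 1)
    (hx : x < t) (hy : y < t) : a * x + b * y < t := by
  rcases eq_or_lt_of_le ha with h | h
  · have hb1 : b = 1 := by linarith
    rw [← h, hb1]; simpa using hy
  · have h1 : a * t + b * t = t := by rw [← add_mul, hab, one_mul]
    linarith [mul_lt_mul_of_pos_left hx h, mul_le_mul_of_nonneg_left hy.le hb]

theorem stmt12 (m n : ℕ) (A B C D : ℤ × ℤ)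
    (hA : A ∈ Grid m n) (hB : B ∈ Grid m n)
    (hC : C ∈ Grid m n) (hD : D ∈ Grid m n)
    (hprop : ProperPair A B C D) :
    (segment ℝ (toR A) (toR C) ∩ segment ℝ (toR B) (toR D)).Nonempty ∧
    ¬ IsThreshold m n (fun X => fseg A B X && fseg C D X) := by
  obtain ⟨⟨hABne, hABadj⟩, ⟨hCDne, hCDadj⟩, hfA, hfB, hfC, hfD⟩ := hprop
  have hX : 0 ≤ Det A B C := det_nonneg hfC
  have hY : 0 ≤ Det A B D := det_nonneg hfD
  have hZ : 0 ≤ Det C D A := det_nonneg hfA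
  have hW : 0 ≤ Det C D B := det_nonneg hfB
  have key : (segment ℝ (toR A) (toR C) ∩ segment ℝ (toR B) (toR D)).Nonempty := by
    rcases eq_or_lt_of_le hY with hY0 | hYpos
    · -- degenerate case: D on the line AB
      have hY0' : Det A B D = 0 := hY0.symm
      have hclose := close_of_fseg hfD hY0'
      have hcolZ : (B.1 - A.1) * (D.2 - A.2) = (B.2 - A.2) * (D.1 - A.1) := by
        unfold Det at hY0'; linarith
      have hcolR : ((B.1 : ℝ) - A.1) * ((D.2 : ℝ) - A.2)
          = ((B.2 : ℝ) - A.2) * ((D.1 : ℝ) - A.1) := by exact_mod_cast hcolZ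
      have hQ : (0:ℝ) < ((B.1 : ℝ) - A.1) ^ 2 + ((B.2 : ℝ) - A.2) ^ 2 := by
        have hvne : (B.1 : ℝ) - A.1 ≠ 0 ∨ (B.2 : ℝ) - A.2 ≠ 0 := by
          by_contra hc
          push_neg at hc
          apply hABne
          have h1 : A.1 = B.1 := by exact_mod_cast sub_eq_zero.mp hc.1 |>.symm
          have h2 : A.2 = B.2 := by exact_mod_cast sub_eq_zero.mp hc.2 |>.symm
          exact Prod.ext h1 h2
        rcases hvne with h | h
        · rcases h.lt_or_gt with h2 | h2 <;> nlinarith [sq_nonneg ((B.2:ℝ) - A.2)]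
        · rcases h.lt_or_gt with h2 | h2 <;> nlinarith [sq_nonneg ((B.1:ℝ) - A.1)]
      obtain ⟨d, hD1, hD2⟩ : ∃ d : ℝ, (D.1 : ℝ) - A.1 = d * ((B.1:ℝ) - A.1) ∧
          (D.2 : ℝ) - A.2 = d * ((B.2:ℝ) - A.2) := by
        refine ⟨(((D.1:ℝ) - A.1) * ((B.1:ℝ) - A.1) + ((D.2:ℝ) - A.2) * ((B.2:ℝ) - A.2)) /
          (((B.1 : ℝ) - A.1) ^ 2 + ((B.2 : ℝ) - A.2) ^ 2), ?_, ?_⟩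
        · field_simp
          linear_combination (-((B.2:ℝ) - A.2)) * hcolR
        · field_simp
          linear_combination ((B.1:ℝ) - A.1) * hcolR
      have hcloseR : ((D.1:ℝ) - A.1) ^ 2 + ((D.2:ℝ) - A.2) ^ 2
          < ((D.1:ℝ) - B.1) ^ 2 + ((D.2:ℝ) - B.2) ^ 2 := by exact_mod_cast hclose
      have e1 : (D.1 : ℝ) - B.1 = (d - 1) * ((B.1:ℝ) - A.1) := by linear_combination hD1
      have e2 : (D.2 : ℝ) - B.2 = (d - 1) * ((B.2:ℝ) - A.2) := by linear_combination hD2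
      have hdQ : d ^ 2 * (((B.1 : ℝ) - A.1) ^ 2 + ((B.2 : ℝ) - A.2) ^ 2)
          < (d - 1) ^ 2 * (((B.1 : ℝ) - A.1) ^ 2 + ((B.2 : ℝ) - A.2) ^ 2) := by
        calc d ^ 2 * (((B.1 : ℝ) - A.1) ^ 2 + ((B.2 : ℝ) - A.2) ^ 2)
            = ((D.1:ℝ) - A.1) ^ 2 + ((D.2:ℝ) - A.2) ^ 2 := by rw [hD1, hD2]; ring
        _ < ((D.1:ℝ) - B.1) ^ 2 + ((D.2:ℝ) - B.2) ^ 2 := hcloseR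
        _ = (d - 1) ^ 2 * (((B.1 : ℝ) - A.1) ^ 2 + ((B.2 : ℝ) - A.2) ^ 2) := by
            rw [e1, e2]; ring
      have hdlt : d < 1 / 2 := by nlinarith [hQ, hdQ]
      have hdle : d ≤ 0 := by
        by_contra hpos
        push_neg at hpos
        have hmem : toR D ∈ segment ℝ (toR A) (toR B) := by
          refine ⟨1 - d, d, by linarith, hpos.le, by ring, ?_⟩
          rw [Prod.ext_iff]
          constructor
          · show (1 - d) * (A.1 : ℝ) + d * (B.1 : ℝ) = (D.1 : ℝ)
            linear_combination -hD1
          · show (1 - d) * (A.2 : ℝ) + d * (B.2 : ℝ) = (D.2 : ℝ)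
            linear_combination -hD2
        rcases hABadj D hmem with h | h
        · -- D = A forces d = 0
          subst h
          have h1 : d * ((B.1:ℝ) - D.1) = 0 := by linarith [hD1]
          have h2 : d * ((B.2:ℝ) - D.2) = 0 := by linarith [hD2]
          have hv1 : (B.1:ℝ) - D.1 = 0 := by
            rcases mul_eq_zero.mp h1 with h' | h'
            · exact absurd h' hpos.ne'
            · exact h'
          have hv2 : (B.2:ℝ) - D.2 = 0 := by
            rcases mul_eq_zero.mp h2 with h' | h'
            · exact absurd h' hpos.ne'
            · exact h'
          rw [hv1, hv2] at hQ
          norm_num at hQ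
        · -- D = B contradicts closeness
          subst h
          nlinarith [sq_nonneg (D.1 - A.1), sq_nonneg (D.2 - A.2), hclose]
      refine ⟨toR A, left_mem_segment ℝ (toR A) (toR C), ?_⟩
      have h1d : (0:ℝ) < 1 - d := by linarith
      refine ⟨-d / (1 - d), 1 / (1 - d), div_nonneg (by linarith) h1d.le,
        by positivity, by field_simp; ring, ?_⟩
      rw [Prod.ext_iff]
      constructor
      · show (-d / (1 - d)) * (B.1 : ℝ) + (1 / (1 - d)) * (D.1 : ℝ) = (A.1 : ℝ)
        field_simp
        linear_combination hD1
      · show (-d / (1 - d)) * (B.2 : ℝ) + (1 / (1 - d)) * (D.2 : ℝ) = (A.2 : ℝ)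
        field_simp
        linear_combination hD2
    · -- main case
      have hsumZ : Det A B C + Det C D A = Det A B D + Det C D B := by unfold Det; ring
      have hid1Z : Det C D B * A.1 - Det C D A * B.1 + Det A B D * C.1 - Det A B C * D.1 = 0 := by
        unfold Det; ring
      have hid2Z : Det C D B * A.2 - Det C D A * B.2 + Det A B D * C.2 - Det A B C * D.2 = 0 := by
        unfold Det; ring
      have hXR : (0:ℝ) ≤ (Det A B C : ℝ) := by exact_mod_cast hX
      have hYR : (0:ℝ) < (Det A B D : ℝ) := by exact_mod_cast hYpos
      have hZR : (0:ℝ) ≤ (Det C D A : ℝ) := by exact_mod_cast hZ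
      have hWR : (0:ℝ) ≤ (Det C D B : ℝ) := by exact_mod_cast hW
      have hsumR : (Det A B C : ℝ) + (Det C D A : ℝ) = (Det A B D : ℝ) + (Det C D B : ℝ) := by
        exact_mod_cast hsumZ
      have hid1R : (Det C D B : ℝ) * A.1 - (Det C D A : ℝ) * B.1 + (Det A B D : ℝ) * C.1
          - (Det A B C : ℝ) * D.1 = 0 := by exact_mod_cast hid1Z
      have hid2R : (Det C D B : ℝ) * A.2 - (Det C D A : ℝ) * B.2 + (Det A B D : ℝ) * C.2
          - (Det A B C : ℝ) * D.2 = 0 := by exact_mod_cast hid2Z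
      set S : ℝ := (Det A B D : ℝ) + (Det C D B : ℝ) with hSdef
      have hS : 0 < S := by rw [hSdef]; linarith
      refine ⟨(((Det C D B : ℝ) * A.1 + (Det A B D : ℝ) * C.1) / S,
              ((Det C D B : ℝ) * A.2 + (Det A B D : ℝ) * C.2) / S), ?_, ?_⟩
      · refine ⟨(Det C D B : ℝ) / S, (Det A B D : ℝ) / S, div_nonneg hWR hS.le,
          div_nonneg hYR.le hS.le, ?_, ?_⟩
        · rw [← add_div, hSdef, add_comm]
          exact div_self (by rw [hSdef] at hS; linarith)
        · rw [Prod.ext_iff]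
          constructor
          · show ((Det C D B : ℝ) / S) * (A.1:ℝ) + ((Det A B D : ℝ) / S) * (C.1:ℝ)
              = ((Det C D B : ℝ) * A.1 + (Det A B D : ℝ) * C.1) / S
            field_simp
          · show ((Det C D B : ℝ) / S) * (A.2:ℝ) + ((Det A B D : ℝ) / S) * (C.2:ℝ)
              = ((Det C D B : ℝ) * A.2 + (Det A B D : ℝ) * C.2) / S
            field_simp
      · refine ⟨(Det C D A : ℝ) / S, (Det A B C : ℝ) / S, div_nonneg hZR hS.le,
          div_nonneg hXR hS.le, ?_, ?_⟩
        · rw [← add_div]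
          rw [show (Det C D A : ℝ) + (Det A B C : ℝ) = S from by rw [hSdef]; linarith]
          exact div_self hS.ne'
        · rw [Prod.ext_iff]
          constructor
          · show ((Det C D A : ℝ) / S) * (B.1:ℝ) + ((Det A B C : ℝ) / S) * (D.1:ℝ)
              = ((Det C D B : ℝ) * A.1 + (Det A B D : ℝ) * C.1) / S
            rw [div_mul_eq_mul_div, div_mul_eq_mul_div, ← add_div]
            congr 1
            linarith [hid1R]
          · show ((Det C D A : ℝ) / S) * (B.2:ℝ) + ((Det A B C : ℝ) / S) * (D.2:ℝ)
              = ((Det C D B : ℝ) * A.2 + (Det A B D : ℝ) * C.2) / S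
            rw [div_mul_eq_mul_div, div_mul_eq_mul_div, ← add_div]
            congr 1
            linarith [hid2R]
  refine ⟨key, ?_⟩
  rintro ⟨a0, a1, a2, hsep⟩
  obtain ⟨P, hPAC, hPBD⟩ := key
  have hLA : a1 * (A.1 : ℝ) + a2 * (A.2 : ℝ) ≥ a0 := by
    apply (hsep A hA).mp
    show (fseg A B A && fseg C D A) = true
    rw [fseg_fst A B hABne, hfA]
    rfl
  have hLC : a1 * (C.1 : ℝ) + a2 * (C.2 : ℝ) ≥ a0 := by
    apply (hsep C hC).mp
    show (fseg A B C && fseg C D C) = true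
    rw [hfC, fseg_fst C D hCDne]
    rfl
  have hLB : a1 * (B.1 : ℝ) + a2 * (B.2 : ℝ) < a0 := by
    by_contra hcon
    push_neg at hcon
    have := (hsep B hB).mpr hcon
    rw [show (fun X => fseg A B X && fseg C D X) B = (fseg A B B && fseg C D B) from rfl,
      fseg_snd A B] at this
    simp at this
  have hLD : a1 * (D.1 : ℝ) + a2 * (D.2 : ℝ) < a0 := by
    by_contra hcon
    push_neg at hcon
    have := (hsep D hD).mpr hcon
    rw [show (fun X => fseg A B X && fseg C D X) D = (fseg A B D && fseg C D D) from rfl,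
      fseg_snd C D] at this
    simp at this
  obtain ⟨a, b, ha, hb, hab, hEq1⟩ := hPAC
  obtain ⟨c, e, hc, he, hce, hEq2⟩ := hPBD
  have h11 : a * (A.1 : ℝ) + b * (C.1 : ℝ) = P.1 := by
    have := congrArg Prod.fst hEq1
    simpa [toR] using this
  have h12 : a * (A.2 : ℝ) + b * (C.2 : ℝ) = P.2 := by
    have := congrArg Prod.snd hEq1
    simpa [toR] using this
  have h21 : c * (B.1 : ℝ) + e * (D.1 : ℝ) = P.1 := by
    have := congrArg Prod.fst hEq2
    simpa [toR] using this
  have h22 : c * (B.2 : ℝ) + e * (D.2 : ℝ) = P.2 := by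
    have := congrArg Prod.snd hEq2
    simpa [toR] using this
  have hge : a0 ≤ a1 * P.1 + a2 * P.2 := by
    rw [← h11, ← h12]
    have := convex_le ha hb hab hLA hLC
    linarith [this]
  have hlt : a1 * P.1 + a2 * P.2 < a0 := by
    rw [← h21, ← h22]
    have := convex_lt hc he hce hLB hLD
    linarith [this]
  linarith
end

section
/- Let {AB, CD} be a proper pair of collinear oriented prime segments defining the 2-threshold function f = f_AB ∧ f_CD on the grid G. Then the set of true points of f equals the set of integer grid points lying on the segment AC. -/
lemma seg_iff (x y z : ℝ × ℝ) :
    z ∈ segment ℝ x y ↔ ∃ θ : ℝ, 0 ≤ θ ∧ θ ≤ 1 ∧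
      z.1 = x.1 + θ * (y.1 - x.1) ∧ z.2 = x.2 + θ * (y.2 - x.2) := by
  rw [segment_eq_image']
  constructor
  · rintro ⟨θ, ⟨h0, h1⟩, rfl⟩
    exact ⟨θ, h0, h1, rfl, rfl⟩
  · rintro ⟨θ, h0, h1, hz1, hz2⟩
    exact ⟨θ, ⟨h0, h1⟩, by ext <;> simp [hz1, hz2]⟩

lemma coeff {p q x y : ℤ} (hg : Int.gcd p q = 1) (h : x * q = y * p) :
    ∃ c : ℤ, x = c * p ∧ y = c * q := by
  rcases eq_or_ne p 0 with rfl | hp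
  · have hq : q = 1 ∨ q = -1 := by
      have := Int.natAbs_eq q
      simp [Int.gcd] at hg
      omega
    have hx : x = 0 := by rcases hq with rfl | rfl <;> omega
    refine ⟨y * q, by simp [hx], ?_⟩
    rcases hq with rfl | rfl <;> ring
  · have hco : IsCoprime p q := Int.isCoprime_iff_gcd_eq_one.mpr hg
    have hdvd : p ∣ x := hco.dvd_of_dvd_mul_right ⟨y, by linarith [h]⟩
    obtain ⟨c, rfl⟩ := hdvd
    refine ⟨c, by ring, ?_⟩
    have h2 : p * (c * q) = p * y := by ring_nf; ring_nf at h; linarith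
    have := mul_left_cancel₀ hp h2
    omega

lemma adj_gcd {A B : ℤ × ℤ} (h : Adjacent A B) :
    Int.gcd (B.1 - A.1) (B.2 - A.2) = 1 := by
  set p := B.1 - A.1 with hp
  set q := B.2 - A.2 with hq
  have hne : ¬(p = 0 ∧ q = 0) := by
    rintro ⟨h1, h2⟩
    exact h.1 (Prod.ext (by omega) (by omega)).symm
  set g : ℕ := Int.gcd p q with hg
  have hgpos : 0 < (g : ℤ) := by
    have : g ≠ 0 := fun h0 => hne ⟨Int.gcd_eq_zero_iff.mp h0 |>.1, Int.gcd_eq_zero_iff.mp h0 |>.2⟩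
    positivity
  obtain ⟨p', hp'⟩ : (g : ℤ) ∣ p := Int.gcd_dvd_left _ _
  obtain ⟨q', hq'⟩ : (g : ℤ) ∣ q := Int.gcd_dvd_right _ _
  by_contra hg1
  have hg2 : 2 ≤ (g : ℤ) := by omega
  have hmem : toR (A.1 + p', A.2 + q') ∈ segment ℝ (toR A) (toR B) := by
    rw [seg_iff]
    refine ⟨1 / (g : ℝ), by positivity, ?_, ?_, ?_⟩
    · rw [div_le_one (by exact_mod_cast hgpos)]; exact_mod_cast hgpos
    · show ((A.1 + p' : ℤ) : ℝ) = (A.1 : ℝ) + (1 / g) * ((B.1 : ℝ) - A.1)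
      have hbp : ((B.1 : ℝ) - A.1) = (g : ℝ) * p' := by
        have : B.1 - A.1 = (g : ℤ) * p' := by rw [← hp, hp']
        exact_mod_cast congrArg (Int.cast : ℤ → ℝ) this
      rw [hbp]; push_cast
      have hgne : (g : ℝ) ≠ 0 := by exact_mod_cast hgpos.ne'
      field_simp
    · show ((A.2 + q' : ℤ) : ℝ) = (A.2 : ℝ) + (1 / g) * ((B.2 : ℝ) - A.2)
      have hbq : ((B.2 : ℝ) - A.2) = (g : ℝ) * q' := by
        have : B.2 - A.2 = (g : ℤ) * q' := by rw [← hq, hq']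
        exact_mod_cast congrArg (Int.cast : ℤ → ℝ) this
      rw [hbq]; push_cast
      have hgne : (g : ℝ) ≠ 0 := by exact_mod_cast hgpos.ne'
      field_simp
  rcases h.2 _ hmem with hEA | hEB
  · have e1 : A.1 + p' = A.1 := congrArg Prod.fst hEA
    have e2 : A.2 + q' = A.2 := congrArg Prod.snd hEA
    have hp0 : p' = 0 := by omega
    have hq0 : q' = 0 := by omega
    exact hne ⟨by rw [hp', hp0, mul_zero], by rw [hq', hq0, mul_zero]⟩
  · have e1 : A.1 + p' = B.1 := congrArg Prod.fst hEB
    have e2 : A.2 + q' = B.2 := congrArg Prod.snd hEB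
    have : p' = p := by omega
    have : q' = q := by omega
    have hp0 : p = 0 := by nlinarith [hp', hq']
    have hq0 : q = 0 := by nlinarith [hp', hq']
    exact hne ⟨hp0, hq0⟩

lemma fseg_param {P Q R : ℤ × ℤ} {p q t : ℤ} (hs : ¬(p = 0 ∧ q = 0))
    (hq1 : Q.1 - P.1 = p) (hq2 : Q.2 - P.2 = q)
    (hr1 : R.1 - P.1 = t * p) (hr2 : R.2 - P.2 = t * q) :
    (fseg P Q R = true ↔ t ≤ 0) := by
  have hdet : Det P Q R = 0 := by unfold Det; rw [hq1, hq2, hr1, hr2]; ring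
  have hspos : 0 < p ^ 2 + q ^ 2 := by
    rcases (by omega : p ≠ 0 ∨ q ≠ 0) with h | h <;> positivity
  unfold fseg
  rw [if_pos hdet]
  have e1 : R.1 - Q.1 = (t - 1) * p := by linear_combination hr1 - hq1
  have e2 : R.2 - Q.2 = (t - 1) * q := by linear_combination hr2 - hq2
  rw [hr1, hr2, e1, e2]
  simp only [decide_eq_true_eq]
  constructor
  · intro h
    nlinarith
  · intro h
    nlinarith

/-- for a proper pair of collinear segments {AB, CD} defining
f = f_AB ∧ f_CD on the grid, the true points of f are exactly the grid points
on the segment AC. -/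
theorem stmt13 (m n : ℕ) (A B C D : ℤ × ℤ)
    (hA : A ∈ Grid m n) (hB : B ∈ Grid m n)
    (hC : C ∈ Grid m n) (hD : D ∈ Grid m n)
    (hcol : Collinear ℝ ({toR A, toR B, toR C, toR D} : Set (ℝ × ℝ)))
    (hprop : ProperPair A B C D) :
    ∀ X ∈ Grid m n,
      ((fseg A B X && fseg C D X) = true ↔ toR X ∈ segment ℝ (toR A) (toR C)) := by
  obtain ⟨hAB, hCD, hCDA, hCDB, hABC, hABD⟩ := hprop
  set p := B.1 - A.1 with hp
  set q := B.2 - A.2 with hq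
  have hgAB : Int.gcd p q = 1 := adj_gcd hAB
  have hne : ¬(p = 0 ∧ q = 0) := by
    rintro ⟨h1, h2⟩; simp [h1, h2, Int.gcd] at hgAB
  -- collinearity: extract cross products
  rw [collinear_iff_of_mem
    (show toR A ∈ ({toR A, toR B, toR C, toR D} : Set (ℝ × ℝ)) by simp)] at hcol
  obtain ⟨v, hv⟩ := hcol
  obtain ⟨rB, hrB⟩ := hv (toR B) (by simp)
  obtain ⟨rC, hrC⟩ := hv (toR C) (by simp)
  obtain ⟨rD, hrD⟩ := hv (toR D) (by simp)
  have hb1 : (B.1 : ℝ) = rB * v.1 + A.1 := congrArg Prod.fst hrB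
  have hb2 : (B.2 : ℝ) = rB * v.2 + A.2 := congrArg Prod.snd hrB
  have hc1' : (C.1 : ℝ) = rC * v.1 + A.1 := congrArg Prod.fst hrC
  have hc2' : (C.2 : ℝ) = rC * v.2 + A.2 := congrArg Prod.snd hrC
  have hd1' : (D.1 : ℝ) = rD * v.1 + A.1 := congrArg Prod.fst hrD
  have hd2' : (D.2 : ℝ) = rD * v.2 + A.2 := congrArg Prod.snd hrD
  -- integer parametrization of C and D
  obtain ⟨c, hc1, hc2⟩ : ∃ c : ℤ, C.1 - A.1 = c * p ∧ C.2 - A.2 = c * q := by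
    apply coeff hgAB
    have : ((C.1 - A.1) * q : ℤ) = ((C.2 - A.2) * p : ℤ) → _ := id
    have hr : ((C.1 : ℝ) - A.1) * ((B.2 : ℝ) - A.2) = ((C.2 : ℝ) - A.2) * ((B.1 : ℝ) - A.1) := by
      rw [hb1, hb2, hc1', hc2']; ring
    have : (((C.1 - A.1) * (B.2 - A.2) : ℤ) : ℝ) = (((C.2 - A.2) * (B.1 - A.1) : ℤ) : ℝ) := by
      push_cast; linarith [hr]
    rw [hp, hq]
    exact_mod_cast this
  obtain ⟨d, hd1, hd2⟩ : ∃ d : ℤ, D.1 - A.1 = d * p ∧ D.2 - A.2 = d * q := by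
    apply coeff hgAB
    have hr : ((D.1 : ℝ) - A.1) * ((B.2 : ℝ) - A.2) = ((D.2 : ℝ) - A.2) * ((B.1 : ℝ) - A.1) := by
      rw [hb1, hb2, hd1', hd2']; ring
    have : (((D.1 - A.1) * (B.2 - A.2) : ℤ) : ℝ) = (((D.2 - A.2) * (B.1 - A.1) : ℤ) : ℝ) := by
      push_cast; linarith [hr]
    rw [hp, hq]
    exact_mod_cast this
  -- D - C is a unit multiple of (p, q)
  have hdc1 : D.1 - C.1 = (d - c) * p := by linear_combination hd1 - hc1
  have hdc2 : D.2 - C.2 = (d - c) * q := by linear_combination hd2 - hc2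
  have hgCD : Int.gcd (D.1 - C.1) (D.2 - C.2) = 1 := adj_gcd hCD
  have hdcu : d - c = 1 ∨ d - c = -1 := by
    rw [hdc1, hdc2, Int.gcd_mul_left, hgAB, mul_one] at hgCD
    omega
  -- constraints from the proper pair
  have hcle : c ≤ 0 := (fseg_param hne hp.symm hq.symm hc1 hc2).mp hABC
  have hdle : d ≤ 0 := (fseg_param hne hp.symm hq.symm hd1 hd2).mp hABD
  have hd_eq : d = c - 1 := by
    rcases hdcu with h1 | h1
    · -- d = c + 1 : contradiction with fseg C D A
      exfalso
      have ha1 : A.1 - C.1 = (-c) * p := by linear_combination -hc1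
      have ha2 : A.2 - C.2 = (-c) * q := by linear_combination -hc2
      have hq1 : D.1 - C.1 = p := by rw [hdc1, h1, one_mul]
      have hq2 : D.2 - C.2 = q := by rw [hdc2, h1, one_mul]
      have := (fseg_param hne hq1 hq2 ha1 ha2).mp hCDA
      omega
    · omega
  subst hd_eq
  -- main case analysis
  intro X hX
  rcases eq_or_ne (Det A B X) 0 with hdet | hdet
  · -- X is on the line
    obtain ⟨t, hx1, hx2⟩ : ∃ t : ℤ, X.1 - A.1 = t * p ∧ X.2 - A.2 = t * q := by
      apply coeff hgAB
      unfold Det at hdet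
      rw [← hp, ← hq] at hdet
      linarith [hdet]
    have hAB_iff : fseg A B X = true ↔ t ≤ 0 := fseg_param hne hp.symm hq.symm hx1 hx2
    have hCD_iff : fseg C D X = true ↔ c ≤ t := by
      have hq1 : D.1 - C.1 = -p := by rw [hdc1]; ring
      have hq2 : D.2 - C.2 = -q := by rw [hdc2]; ring
      have hx1' : X.1 - C.1 = (c - t) * (-p) := by linear_combination hx1 - hc1
      have hx2' : X.2 - C.2 = (c - t) * (-q) := by linear_combination hx2 - hc2
      have := fseg_param (p := -p) (q := -q) (by omega) hq1 hq2 hx1' hx2'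
      rw [this]
      omega
    rw [Bool.and_eq_true, hAB_iff, hCD_iff, seg_iff]
    constructor
    · rintro ⟨ht0, hct⟩
      rcases eq_or_lt_of_le hcle with hc0 | hcneg
      · -- c = 0, so t = 0 and X = A
        have ht : t = 0 := by omega
        refine ⟨0, le_refl 0, zero_le_one, ?_, ?_⟩
        · show (X.1 : ℝ) = (A.1 : ℝ) + 0 * ((C.1 : ℝ) - A.1)
          have : X.1 = A.1 := by rw [ht] at hx1; omega
          rw [this]; ring
        · show (X.2 : ℝ) = (A.2 : ℝ) + 0 * ((C.2 : ℝ) - A.2)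
          have : X.2 = A.2 := by rw [ht] at hx2; omega
          rw [this]; ring
      · refine ⟨(t : ℝ) / (c : ℝ), ?_, ?_, ?_, ?_⟩
        · exact div_nonneg_of_nonpos (by exact_mod_cast ht0) (by exact_mod_cast hcle)
        · rw [div_le_one_of_neg (show ((c : ℝ)) < 0 by exact_mod_cast hcneg)]
          exact_mod_cast hct
        · show (X.1 : ℝ) = (A.1 : ℝ) + (t : ℝ) / c * ((C.1 : ℝ) - A.1)
          have e1 : (C.1 : ℝ) - A.1 = (c : ℝ) * p := by exact_mod_cast congrArg (Int.cast : ℤ → ℝ) (by linarith [hc1] : C.1 - A.1 = c * p)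
          have e2 : (X.1 : ℝ) - A.1 = (t : ℝ) * p := by exact_mod_cast congrArg (Int.cast : ℤ → ℝ) hx1
          have hcne : (c : ℝ) ≠ 0 := by exact_mod_cast hcneg.ne
          rw [e1, show (t : ℝ) / c * ((c : ℝ) * p) = (t : ℝ) * p by field_simp]
          linarith [e2]
        · show (X.2 : ℝ) = (A.2 : ℝ) + (t : ℝ) / c * ((C.2 : ℝ) - A.2)
          have e1 : (C.2 : ℝ) - A.2 = (c : ℝ) * q := by exact_mod_cast congrArg (Int.cast : ℤ → ℝ) hc2
          have e2 : (X.2 : ℝ) - A.2 = (t : ℝ) * q := by exact_mod_cast congrArg (Int.cast : ℤ → ℝ) hx2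
          have hcne : (c : ℝ) ≠ 0 := by exact_mod_cast hcneg.ne
          rw [e1, show (t : ℝ) / c * ((c : ℝ) * q) = (t : ℝ) * q by field_simp]
          linarith [e2]
    · rintro ⟨θ, hθ0, hθ1, hz1, hz2⟩
      have e1 : (C.1 : ℝ) - A.1 = (c : ℝ) * p := by exact_mod_cast congrArg (Int.cast : ℤ → ℝ) hc1
      have e2 : (C.2 : ℝ) - A.2 = (c : ℝ) * q := by exact_mod_cast congrArg (Int.cast : ℤ → ℝ) hc2
      have f1 : (X.1 : ℝ) - A.1 = (t : ℝ) * p := by exact_mod_cast congrArg (Int.cast : ℤ → ℝ) hx1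
      have f2 : (X.2 : ℝ) - A.2 = (t : ℝ) * q := by exact_mod_cast congrArg (Int.cast : ℤ → ℝ) hx2
      have hz1' : (X.1 : ℝ) = (A.1 : ℝ) + θ * ((C.1 : ℝ) - A.1) := hz1
      have hz2' : (X.2 : ℝ) = (A.2 : ℝ) + θ * ((C.2 : ℝ) - A.2) := hz2
      have ht : (t : ℝ) = θ * c := by
        rcases (by omega : p ≠ 0 ∨ q ≠ 0) with hp0 | hq0
        · have hpne : (p : ℝ) ≠ 0 := by exact_mod_cast hp0
          have : (t : ℝ) * p = θ * c * p := by rw [← f1, hz1', e1]; ring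
          exact mul_right_cancel₀ hpne this
        · have hqne : (q : ℝ) ≠ 0 := by exact_mod_cast hq0
          have : (t : ℝ) * q = θ * c * q := by rw [← f2, hz2', e2]; ring
          exact mul_right_cancel₀ hqne this
      have hcr : (c : ℝ) ≤ 0 := by exact_mod_cast hcle
      have h1 : (t : ℝ) ≤ 0 := by rw [ht]; exact mul_nonpos_of_nonneg_of_nonpos hθ0 hcr
      have h2 : (c : ℝ) ≤ t := by nlinarith [ht]
      exact ⟨by exact_mod_cast h1, by exact_mod_cast h2⟩
  · -- X is off the line: both sides false
    have hdetCD : Det C D X = -Det A B X := by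
      unfold Det
      linear_combination (X.2 - C.2) * hdc1 - (X.1 - C.1) * hdc2 + (B.1 - A.1) * hc2 - (B.2 - A.2) * hc1
    apply iff_of_false
    · unfold fseg
      rw [if_neg hdet, if_neg (by omega : Det C D X ≠ 0)]
      simp only [Bool.and_eq_true, decide_eq_true_eq]
      omega
    · intro hmem
      rw [seg_iff] at hmem
      obtain ⟨θ, _, _, hz1, hz2⟩ := hmem
      have e1 : (C.1 : ℝ) - A.1 = (c : ℝ) * p := by exact_mod_cast congrArg (Int.cast : ℤ → ℝ) hc1
      have e2 : (C.2 : ℝ) - A.2 = (c : ℝ) * q := by exact_mod_cast congrArg (Int.cast : ℤ → ℝ) hc2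
      have hz1' : (X.1 : ℝ) = (A.1 : ℝ) + θ * ((C.1 : ℝ) - A.1) := hz1
      have hz2' : (X.2 : ℝ) = (A.2 : ℝ) + θ * ((C.2 : ℝ) - A.2) := hz2
      apply hdet
      have hr : ((Det A B X : ℤ) : ℝ) = 0 := by
        unfold Det
        rw [← hp, ← hq]
        push_cast
        rw [hz1', hz2', e1, e2]
        ring
      exact_mod_cast hr
end

section
/- Let AB and CD be distinct oriented prime segments such that f_AB(C) = 1, f_AB(D) = 0, and f_CD(A) = 1. Then the line through A and B intersects the segment CD in exactly one point X, and A lies on the segment XB. -/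
def detR_s17 (p q r : ℝ × ℝ) : ℝ :=
  (q.1 - p.1) * (r.2 - p.2) - (q.2 - p.2) * (r.1 - p.1)

lemma detR_toR (P Q R : ℤ × ℤ) : detR_s17 (toR P) (toR Q) (toR R) = (Det P Q R : ℝ) := by
  simp only [detR_s17, toR, Det]
  push_cast
  ring

lemma collinear_of_param (a b x : ℝ × ℝ) (s : ℝ) (hx : x = a + s • (b - a)) :
    Collinear ℝ ({a, b, x} : Set (ℝ × ℝ)) := by
  rw [collinear_iff_exists_forall_eq_smul_vadd]
  refine ⟨a, b - a, ?_⟩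
  intro p hp
  simp only [Set.mem_insert_iff, Set.mem_singleton_iff] at hp
  rcases hp with rfl | rfl | rfl
  · exact ⟨0, by simp⟩
  · exact ⟨1, by simp⟩
  · exact ⟨s, by rw [hx]; simp [add_comm]⟩

lemma detR_eq_zero_of_collinear {a b y : ℝ × ℝ}
    (h : Collinear ℝ ({a, b, y} : Set (ℝ × ℝ))) : detR_s17 a b y = 0 := by
  rw [collinear_iff_exists_forall_eq_smul_vadd] at h
  obtain ⟨p0, v, hv⟩ := h
  obtain ⟨r1, ha⟩ := hv a (by simp)
  obtain ⟨r2, hb⟩ := hv b (by simp)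
  obtain ⟨r3, hy⟩ := hv y (by simp)
  have ha1 : a.1 = r1 * v.1 + p0.1 := by rw [ha]; simp [Prod.smul_fst]
  have ha2 : a.2 = r1 * v.2 + p0.2 := by rw [ha]; simp [Prod.smul_snd]
  have hb1 : b.1 = r2 * v.1 + p0.1 := by rw [hb]; simp [Prod.smul_fst]
  have hb2 : b.2 = r2 * v.2 + p0.2 := by rw [hb]; simp [Prod.smul_snd]
  have hy1 : y.1 = r3 * v.1 + p0.1 := by rw [hy]; simp [Prod.smul_fst]
  have hy2 : y.2 = r3 * v.2 + p0.2 := by rw [hy]; simp [Prod.smul_snd]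
  simp only [detR_s17, ha1, ha2, hb1, hb2, hy1, hy2]
  ring

lemma param_of_detR {a b x : ℝ × ℝ} (h : detR_s17 a b x = 0) (hab : a ≠ b) :
    ∃ s : ℝ, x = a + s • (b - a) := by
  unfold detR_s17 at h
  by_cases h1 : b.1 - a.1 = 0
  · have h2 : b.2 - a.2 ≠ 0 := by
      intro h2
      exact hab (Prod.ext (by linarith) (by linarith))
    refine ⟨(x.2 - a.2) / (b.2 - a.2), Prod.ext ?_ ?_⟩
    · simp only [Prod.fst_add, Prod.smul_fst, smul_eq_mul, Prod.fst_sub]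
      have h' : (b.2 - a.2) * (x.1 - a.1) = 0 := by rw [h1] at h; linarith
      have hx1 : x.1 - a.1 = 0 := by
        rcases mul_eq_zero.1 h' with hc | hc
        · exact absurd hc h2
        · exact hc
      rw [h1]; ring_nf; linarith
    · simp only [Prod.snd_add, Prod.smul_snd, smul_eq_mul, Prod.snd_sub]
      field_simp
      ring
  · refine ⟨(x.1 - a.1) / (b.1 - a.1), Prod.ext ?_ ?_⟩
    · simp only [Prod.fst_add, Prod.smul_fst, smul_eq_mul, Prod.fst_sub]
      field_simp
      ring
    · simp only [Prod.snd_add, Prod.smul_snd, smul_eq_mul, Prod.snd_sub]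
      field_simp
      nlinarith [h]

lemma detR_affine (p q c d : ℝ × ℝ) (α β : ℝ) (h : α + β = 1) :
    detR_s17 p q (α • c + β • d) = α * detR_s17 p q c + β * detR_s17 p q d := by
  simp only [detR_s17, Prod.fst_add, Prod.snd_add, Prod.smul_fst, Prod.smul_snd, smul_eq_mul]
  have hβ : β = 1 - α := by linarith
  subst hβ
  ring

lemma exists_int_param {vx vy wx wy : ℤ} (h : IsCoprime vx vy) (hc : vx * wy = vy * wx) :
    ∃ k : ℤ, wx = k * vx ∧ wy = k * vy := by
  obtain ⟨u1, u2, hu⟩ := h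
  refine ⟨u1 * wx + u2 * wy, ?_, ?_⟩
  · linear_combination (-wx) * hu - u2 * hc
  · linear_combination (-wy) * hu + u1 * hc

lemma adjacent_coprime {A B : ℤ × ℤ} (h : Adjacent A B) :
    IsCoprime (B.1 - A.1) (B.2 - A.2) := by
  obtain ⟨hne, hseg⟩ := h
  set vx := B.1 - A.1 with hvx
  set vy := B.2 - A.2 with hvy
  have hv0 : vx ≠ 0 ∨ vy ≠ 0 := by
    by_contra hcon
    push_neg at hcon
    exact hne (Prod.ext (by omega) (by omega)).symm
  rw [Int.isCoprime_iff_gcd_eq_one]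
  by_contra hg
  have hg0 : Int.gcd vx vy ≠ 0 := by
    simp only [ne_eq, Int.gcd_eq_zero_iff]
    rcases hv0 with h | h <;> tauto
  set g : ℕ := Int.gcd vx vy with hgdef
  have hg2 : 2 ≤ g := by omega
  obtain ⟨cx, hcx⟩ : (g : ℤ) ∣ vx := Int.gcd_dvd_left vx vy
  obtain ⟨cy, hcy⟩ : (g : ℤ) ∣ vy := Int.gcd_dvd_right vx vy
  have hgR : (0:ℝ) < (g : ℝ) := by positivity
  set P : ℤ × ℤ := (A.1 + cx, A.2 + cy) with hP
  have hmem : toR P ∈ segment ℝ (toR A) (toR B) := by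
    refine ⟨1 - 1/(g:ℝ), 1/(g:ℝ), ?_, by positivity, by ring, ?_⟩
    · have : 1/(g:ℝ) ≤ 1 := by
        rw [div_le_one hgR]
        exact_mod_cast by omega
      linarith
    · have hb1 : (B.1 : ℝ) = (A.1 : ℝ) + (g:ℝ) * (cx:ℝ) := by
        have h' : B.1 = A.1 + (g:ℤ) * cx := by linarith [hcx, hvx]
        exact_mod_cast h'
      have hb2 : (B.2 : ℝ) = (A.2 : ℝ) + (g:ℝ) * (cy:ℝ) := by
        have h' : B.2 = A.2 + (g:ℤ) * cy := by linarith [hcy, hvy]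
        exact_mod_cast h'
      refine Prod.ext ?_ ?_ <;>
        simp only [toR, Prod.fst_add, Prod.snd_add, Prod.smul_fst, Prod.smul_snd,
          smul_eq_mul, hP, hb1, hb2] <;> push_cast <;> field_simp <;> ring
  rcases hseg P hmem with hPA | hPB
  · have h1 : cx = 0 := by
      have := congrArg Prod.fst hPA
      simp [hP] at this
      omega
    have h2 : cy = 0 := by
      have := congrArg Prod.snd hPA
      simp [hP] at this
      omega
    rw [h1] at hcx
    rw [h2] at hcy
    have hx0 : vx = 0 := by simpa using hcx
    have hy0 : vy = 0 := by simpa using hcy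
    rcases hv0 with h | h <;> tauto
  · have hx' : A.1 + cx = B.1 := by
      have h' := congrArg Prod.fst hPB
      simpa [hP] using h'
    have hy' : A.2 + cy = B.2 := by
      have h' := congrArg Prod.snd hPB
      simpa [hP] using h'
    have h1 : cx = vx := by rw [hvx]; omega
    have h2 : cy = vy := by rw [hvy]; omega
    have hgz : (2:ℤ) ≤ (g:ℤ) := by exact_mod_cast hg2
    rw [h1] at hcx
    rw [h2] at hcy
    have hx0 : vx = 0 := by
      have h3 : ((g:ℤ) - 1) * vx = 0 := by linear_combination (-1 : ℤ) * hcx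
      rcases mul_eq_zero.1 h3 with h4 | h4
      · omega
      · exact h4
    have hy0 : vy = 0 := by
      have h3 : ((g:ℤ) - 1) * vy = 0 := by linear_combination (-1 : ℤ) * hcy
      rcases mul_eq_zero.1 h3 with h4 | h4
      · omega
      · exact h4
    rcases hv0 with h | h <;> tauto

lemma excl (A B C D : ℤ × ℤ)
    (hAB : Adjacent A B) (hCD : Adjacent C D) (hne : (A, B) ≠ (C, D))
    (hC0 : Det A B C = 0) (hD0 : Det A B D = 0)
    (hCd : (C.1 - A.1) ^ 2 + (C.2 - A.2) ^ 2 < (C.1 - B.1) ^ 2 + (C.2 - B.2) ^ 2)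
    (hDd : ¬((D.1 - A.1) ^ 2 + (D.2 - A.2) ^ 2 < (D.1 - B.1) ^ 2 + (D.2 - B.2) ^ 2)) :
    False := by
  have cop := adjacent_coprime hAB
  obtain ⟨k, hk1, hk2⟩ := exists_int_param cop
    (show (B.1 - A.1) * (C.2 - A.2) = (B.2 - A.2) * (C.1 - A.1) by
      unfold Det at hC0; linarith)
  obtain ⟨l, hl1, hl2⟩ := exists_int_param cop
    (show (B.1 - A.1) * (D.2 - A.2) = (B.2 - A.2) * (D.1 - A.1) by
      unfold Det at hD0; linarith)
  have hv0 : B.1 - A.1 ≠ 0 ∨ B.2 - A.2 ≠ 0 := by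
    by_contra hcon
    push_neg at hcon
    exact hAB.1 (Prod.ext (by omega) (by omega)).symm
  have hN : 0 < (B.1 - A.1) ^ 2 + (B.2 - A.2) ^ 2 := by
    rcases hv0 with h | h
    · rcases lt_or_gt_of_ne h with h' | h' <;> nlinarith [sq_nonneg (B.2 - A.2)]
    · rcases lt_or_gt_of_ne h with h' | h' <;> nlinarith [sq_nonneg (B.1 - A.1)]
  have e1 : (C.1 - A.1) ^ 2 + (C.2 - A.2) ^ 2
      = k ^ 2 * ((B.1 - A.1) ^ 2 + (B.2 - A.2) ^ 2) := by
    linear_combination (C.1 - A.1 + k * (B.1 - A.1)) * hk1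
      + (C.2 - A.2 + k * (B.2 - A.2)) * hk2
  have e2 : (C.1 - B.1) ^ 2 + (C.2 - B.2) ^ 2
      = (k - 1) ^ 2 * ((B.1 - A.1) ^ 2 + (B.2 - A.2) ^ 2) := by
    linear_combination (C.1 - A.1 + (k - 2) * (B.1 - A.1)) * hk1
      + (C.2 - A.2 + (k - 2) * (B.2 - A.2)) * hk2
  have f1 : (D.1 - A.1) ^ 2 + (D.2 - A.2) ^ 2
      = l ^ 2 * ((B.1 - A.1) ^ 2 + (B.2 - A.2) ^ 2) := by
    linear_combination (D.1 - A.1 + l * (B.1 - A.1)) * hl1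
      + (D.2 - A.2 + l * (B.2 - A.2)) * hl2
  have f2 : (D.1 - B.1) ^ 2 + (D.2 - B.2) ^ 2
      = (l - 1) ^ 2 * ((B.1 - A.1) ^ 2 + (B.2 - A.2) ^ 2) := by
    linear_combination (D.1 - A.1 + (l - 2) * (B.1 - A.1)) * hl1
      + (D.2 - A.2 + (l - 2) * (B.2 - A.2)) * hl2
  rw [e1, e2] at hCd
  rw [f1, f2] at hDd
  push_neg at hDd
  have hk0 : k ≤ 0 := by
    have hsq : k ^ 2 < (k - 1) ^ 2 := (mul_lt_mul_iff_left₀ hN).mp hCd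
    have hx : (k - 1) ^ 2 = k ^ 2 - 2 * k + 1 := by ring
    omega
  have hl1' : 1 ≤ l := by
    have hsq : (l - 1) ^ 2 ≤ l ^ 2 := (mul_le_mul_iff_left₀ hN).mp hDd
    have hx : (l - 1) ^ 2 = l ^ 2 - 2 * l + 1 := by ring
    omega
  have hmZ : (1 : ℤ) ≤ l - k := by omega
  have hmR : (0 : ℝ) < (l : ℝ) - (k : ℝ) := by
    have : (1 : ℝ) ≤ (l : ℝ) - (k : ℝ) := by exact_mod_cast hmZ
    linarith
  have hk1R : (C.1 : ℝ) - A.1 = (k : ℝ) * ((B.1 : ℝ) - A.1) := by exact_mod_cast hk1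
  have hk2R : (C.2 : ℝ) - A.2 = (k : ℝ) * ((B.2 : ℝ) - A.2) := by exact_mod_cast hk2
  have hl1R : (D.1 : ℝ) - A.1 = (l : ℝ) * ((B.1 : ℝ) - A.1) := by exact_mod_cast hl1
  have hl2R : (D.2 : ℝ) - A.2 = (l : ℝ) * ((B.2 : ℝ) - A.2) := by exact_mod_cast hl2
  have hkR : (0 : ℝ) ≤ -(k : ℝ) := by
    have : (k : ℝ) ≤ 0 := by exact_mod_cast hk0
    linarith
  have hlR : (1 : ℝ) ≤ (l : ℝ) := by exact_mod_cast hl1'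
  have hmemA : toR A ∈ segment ℝ (toR C) (toR D) := by
    refine ⟨1 - (-(k : ℝ)) / ((l : ℝ) - k), (-(k : ℝ)) / ((l : ℝ) - k), ?_, ?_, by ring, ?_⟩
    · have h1 : (-(k : ℝ)) / ((l : ℝ) - k) ≤ 1 := by
        rw [div_le_one hmR]; linarith
      linarith
    · exact div_nonneg (by linarith) (by linarith)
    · refine Prod.ext ?_ ?_ <;>
        simp only [toR, Prod.fst_add, Prod.snd_add, Prod.smul_fst, Prod.smul_snd,
          smul_eq_mul] <;> field_simp
      · linear_combination ((l : ℝ) - k) * hk1R + (k : ℝ) * hk1R - (k : ℝ) * hl1R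
      · linear_combination ((l : ℝ) - k) * hk2R + (k : ℝ) * hk2R - (k : ℝ) * hl2R
  have hmemB : toR B ∈ segment ℝ (toR C) (toR D) := by
    refine ⟨1 - (1 - (k : ℝ)) / ((l : ℝ) - k), (1 - (k : ℝ)) / ((l : ℝ) - k), ?_, ?_, by ring, ?_⟩
    · have h1 : (1 - (k : ℝ)) / ((l : ℝ) - k) ≤ 1 := by
        rw [div_le_one hmR]; linarith
      linarith
    · exact div_nonneg (by linarith) (by linarith)
    · refine Prod.ext ?_ ?_ <;>
        simp only [toR, Prod.fst_add, Prod.snd_add, Prod.smul_fst, Prod.smul_snd,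
          smul_eq_mul] <;> field_simp
      · linear_combination ((l : ℝ) - k) * hk1R + ((k : ℝ) - 1) * hk1R + (1 - (k : ℝ)) * hl1R
      · linear_combination ((l : ℝ) - k) * hk2R + ((k : ℝ) - 1) * hk2R + (1 - (k : ℝ)) * hl2R
  rcases hCD.2 A hmemA with hA | hA
  · rcases hCD.2 B hmemB with hB | hB
    · exact hAB.1 (by rw [hA, hB])
    · exact hne (by rw [hA, hB])
  · have hl0 : l * (B.1 - A.1) = 0 ∧ l * (B.2 - A.2) = 0 := by
      constructor
      · rw [← hl1, hA]; ring
      · rw [← hl2, hA]; ring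
    have hB1 : B.1 - A.1 = 0 := by
      rcases mul_eq_zero.1 hl0.1 with h | h
      · omega
      · exact h
    have hB2 : B.2 - A.2 = 0 := by
      rcases mul_eq_zero.1 hl0.2 with h | h
      · omega
      · exact h
    exact hAB.1 (Prod.ext (by omega) (by omega)).symm

lemma detR_self_left (p q : ℝ × ℝ) : detR_s17 p q p = 0 := by simp [detR_s17]

lemma detR_self_right (p q : ℝ × ℝ) : detR_s17 p q q = 0 := by unfold detR_s17; ring

/-- for distinct oriented prime segments AB, CD with
f_AB(C)=1, f_AB(D)=0, f_CD(A)=1, the line through A and B meets the segment CD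
in exactly one point X, and A lies on the segment XB. -/
theorem stmt17 (A B C D : ℤ × ℤ)
    (hAB : Adjacent A B) (hCD : Adjacent C D) (hne : (A, B) ≠ (C, D))
    (h1 : fseg A B C = true) (h2 : fseg A B D = false) (h3 : fseg C D A = true) :
    ∃ X : ℝ × ℝ,
      (X ∈ segment ℝ (toR C) (toR D) ∧
        Collinear ℝ ({toR A, toR B, X} : Set (ℝ × ℝ))) ∧
      (∀ Y : ℝ × ℝ, Y ∈ segment ℝ (toR C) (toR D) →
        Collinear ℝ ({toR A, toR B, Y} : Set (ℝ × ℝ)) → Y = X) ∧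
      toR A ∈ segment ℝ X (toR B) := by
  have h1' : 0 < Det A B C ∨ (Det A B C = 0 ∧
      (C.1 - A.1) ^ 2 + (C.2 - A.2) ^ 2 < (C.1 - B.1) ^ 2 + (C.2 - B.2) ^ 2) := by
    by_cases h0 : Det A B C = 0
    · right; exact ⟨h0, by simpa [fseg, h0] using h1⟩
    · left; simpa [fseg, h0] using h1
  have h2' : Det A B D < 0 ∨ (Det A B D = 0 ∧
      ¬((D.1 - A.1) ^ 2 + (D.2 - A.2) ^ 2 < (D.1 - B.1) ^ 2 + (D.2 - B.2) ^ 2)) := by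
    by_cases h0 : Det A B D = 0
    · right; exact ⟨h0, by simpa [fseg, h0] using h2⟩
    · left
      have := h2
      simp [fseg, h0] at this
      omega
  have h3' : 0 ≤ Det C D A := by
    by_cases h0 : Det C D A = 0
    · exact le_of_eq h0.symm
    · have := h3
      simp [fseg, h0] at this
      omega
  have hd1 : 0 ≤ Det A B C := by rcases h1' with h | h <;> omega
  have hd2 : Det A B D ≤ 0 := by rcases h2' with h | h <;> omega
  have hne0 : Det A B C ≠ 0 ∨ Det A B D ≠ 0 := by
    by_contra hcon
    push_neg at hcon
    rcases h1' with h | ⟨_, hCd⟩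
    · omega
    rcases h2' with h | ⟨_, hDd⟩
    · omega
    exact excl A B C D hAB hCD hne hcon.1 hcon.2 hCd hDd
  have hdenZ : 0 < Det A B C - Det A B D := by omega
  have hden : (0 : ℝ) < (Det A B C : ℝ) - (Det A B D : ℝ) := by exact_mod_cast hdenZ
  have hd1R : (0 : ℝ) ≤ (Det A B C : ℝ) := by exact_mod_cast hd1
  have hd2R : (Det A B D : ℝ) ≤ 0 := by exact_mod_cast hd2
  have he1R : (0 : ℝ) ≤ (Det C D A : ℝ) := by exact_mod_cast h3'
  set t : ℝ := (Det A B C : ℝ) / ((Det A B C : ℝ) - (Det A B D : ℝ)) with ht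
  have ht0 : 0 ≤ t := div_nonneg hd1R (le_of_lt hden)
  have ht1 : t ≤ 1 := by rw [ht, div_le_one hden]; linarith
  set X : ℝ × ℝ := (1 - t) • toR C + t • toR D with hX
  have habne : toR A ≠ toR B := fun h => hAB.1 (toR_inj h)
  have hdetX : detR_s17 (toR A) (toR B) X = 0 := by
    rw [hX, detR_affine _ _ _ _ _ _ (by ring), detR_toR, detR_toR]
    rw [ht]
    field_simp
    ring
  obtain ⟨s, hs⟩ := param_of_detR hdetX habne
  -- value of s
  have hXcd : detR_s17 (toR C) (toR D) X = 0 := by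
    rw [hX, detR_affine _ _ _ _ _ _ (by ring), detR_self_left, detR_self_right]
    ring
  have hscomb : toR A + s • (toR B - toR A) = (1 - s) • toR A + s • toR B := by
    refine Prod.ext ?_ ?_ <;>
      simp only [Prod.fst_add, Prod.snd_add, Prod.fst_sub, Prod.snd_sub,
        Prod.smul_fst, Prod.smul_snd, smul_eq_mul] <;> ring
  have hsval : (Det C D A : ℝ) + s * ((Det A B C : ℝ) - (Det A B D : ℝ)) = 0 := by
    have h0 : detR_s17 (toR C) (toR D) ((1 - s) • toR A + s • toR B) = 0 := by
      rw [← hscomb, ← hs]; exact hXcd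
    rw [detR_affine _ _ _ _ _ _ (by ring), detR_toR, detR_toR] at h0
    have hid : (Det C D B : ℝ) - (Det C D A : ℝ)
        = (Det A B C : ℝ) - (Det A B D : ℝ) := by
      have : Det C D B - Det C D A = Det A B C - Det A B D := by unfold Det; ring
      exact_mod_cast congrArg (fun z : ℤ => (z : ℝ)) this
    linear_combination h0 - s * hid
  have hs0 : s ≤ 0 := by
    by_contra hcon
    push_neg at hcon
    nlinarith [mul_pos hcon hden]
  have h1s : (0 : ℝ) < 1 - s := by linarith
  refine ⟨X, ⟨⟨1 - t, t, by linarith, ht0, by ring, rfl⟩,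
    collinear_of_param _ _ _ s hs⟩, ?_, ?_⟩
  · intro Y hY hYcol
    obtain ⟨α, β, hα, hβ, hαβ, hYeq⟩ := hY
    have hdY : detR_s17 (toR A) (toR B) Y = 0 := detR_eq_zero_of_collinear hYcol
    rw [← hYeq, detR_affine _ _ _ _ _ _ hαβ, detR_toR, detR_toR] at hdY
    have hβt : β * ((Det A B C : ℝ) - (Det A B D : ℝ)) = (Det A B C : ℝ) := by
      linear_combination (-1 : ℝ) * hdY + (Det A B C : ℝ) * hαβ
    have hβ' : β = t := by
      rw [ht, eq_div_iff (ne_of_gt hden)]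
      exact hβt
    have hα' : α = 1 - t := by rw [← hβ']; linarith
    rw [← hYeq, hα', hβ', hX]
  · refine ⟨1 - (-s) / (1 - s), (-s) / (1 - s), ?_,
      div_nonneg (by linarith) (by linarith), by ring, ?_⟩
    · have hle : (-s) / (1 - s) ≤ 1 := by rw [div_le_one h1s]; linarith
      linarith
    · have hX1 : X.1 = (toR A).1 + s * ((toR B).1 - (toR A).1) := by
        rw [hs]
        simp [Prod.smul_fst]
      have hX2 : X.2 = (toR A).2 + s * ((toR B).2 - (toR A).2) := by
        rw [hs]
        simp [Prod.smul_snd]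
      refine Prod.ext ?_ ?_ <;>
        simp only [Prod.fst_add, Prod.snd_add, Prod.smul_fst, Prod.smul_snd, smul_eq_mul]
      · rw [hX1]
        field_simp
        ring
      · rw [hX2]
        field_simp
        ring
end
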